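/- arXiv:1202.0020 — 9 statements merged into one kernel-verified Lean document; each statement's English description precedes it below -/
import Mathlib

section
/- For every real φ with cos φ ≠ −1, as r → 1 from below with r ∈ (0,1), the function r ↦ ∑_{k≥0} (−1)^k · (k+1) · r^k · cos(kφ) tends to cos φ / (2·(1 + cos φ)). -/
open Complex Filter

theorem abel_sum_alternating_cos_linear (φ : ℝ) (h : Real.cos φ ≠ -1) :
    Filter.Tendsto
      (fun r : ℝ => ∑' k : ℕ, (-1 : ℝ) ^ k * (k + 1) * r ^ k * Real.cos (k * φ))
      (nhdsWithin 1 (Set.Ioo 0 1)) (nhds (Real.cos φ / (2 * (1 + Real.cos φ)))) := by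
  set e : ℂ := Complex.exp (φ * Complex.I) with he
  have hre : e.re = Real.cos φ := Complex.exp_ofReal_mul_I_re φ
  have h1 : (1 + e) ≠ 0 := by
    intro hc
    apply h
    have : (1 + e).re = 0 := by rw [hc]; simp
    simp [Complex.add_re, hre] at this
    linarith
  have hcos : 1 + Real.cos φ ≠ 0 := by
    intro hc; apply h; linarith
  -- closed form function
  have key : ∀ r ∈ Set.Ioo (0:ℝ) 1,
      (∑' k : ℕ, (-1 : ℝ) ^ k * (k + 1) * r ^ k * Real.cos (k * φ))
        = (((1 + (r:ℂ) * e)⁻¹ ^ 2).re) := by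
    intro r hr
    obtain ⟨hr0, hr1⟩ := hr
    set z : ℂ := -((r:ℂ) * e) with hz
    have hnz : ‖z‖ < 1 := by
      simp [hz, he, Complex.norm_exp, abs_of_pos hr0]
      simpa [abs_of_pos hr0] using hr1
    have h1z : (1 : ℂ) - z ≠ 0 := by
      intro hc
      rw [sub_eq_zero] at hc
      rw [← hc] at hnz
      simp at hnz
    have hA : HasSum (fun k : ℕ => (k : ℂ) * z ^ k) (z / (1 - z) ^ 2) :=
      hasSum_coe_mul_geometric_of_norm_lt_one hnz
    have hB : HasSum (fun k : ℕ => z ^ k) ((1 - z)⁻¹) :=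
      hasSum_geometric_of_norm_lt_one hnz
    have hC : HasSum (fun k : ℕ => ((k : ℂ) + 1) * z ^ k) ((1 - z)⁻¹ ^ 2) := by
      have := hA.add hB
      have heq : z / (1 - z) ^ 2 + (1 - z)⁻¹ = (1 - z)⁻¹ ^ 2 := by
        field_simp
        ring
      rw [heq] at this
      convert this using 2 with k
      ring
    have hD : HasSum (fun k : ℕ => (((k : ℂ) + 1) * z ^ k).re) (((1 - z)⁻¹ ^ 2).re) :=
      Complex.hasSum_re hC
    have hterm : ∀ k : ℕ, (((k : ℂ) + 1) * z ^ k).re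
        = (-1 : ℝ) ^ k * (k + 1) * r ^ k * Real.cos (k * φ) := by
      intro k
      have hzk : z ^ k = (((-1 : ℝ) ^ k * r ^ k : ℝ) : ℂ) * Complex.exp ((k * φ : ℝ) * Complex.I) := by
        rw [hz, he, neg_pow, mul_pow, ← Complex.exp_nat_mul]
        push_cast
        ring_nf
      rw [hzk]
      have : ((k : ℂ) + 1) * (((( -1 : ℝ) ^ k * r ^ k : ℝ)) * Complex.exp ((k * φ : ℝ) * Complex.I))
          = (((((k:ℝ)+1) * ((-1 : ℝ) ^ k * r ^ k) : ℝ)) : ℂ) * Complex.exp ((k * φ : ℝ) * Complex.I) := by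
        push_cast; ring
      rw [this, Complex.re_ofReal_mul, Complex.exp_ofReal_mul_I_re]
      ring
    simp only [hterm] at hD
    rw [hD.tsum_eq]
    congr 2
    rw [hz]
    ring
  have hF1 : (((1 + (1:ℝ) * e)⁻¹ ^ 2).re) = Real.cos φ / (2 * (1 + Real.cos φ)) := by
    have hone : (1 + ((1:ℝ):ℂ) * e) = 1 + e := by push_cast; ring
    have him : e.im = Real.sin φ := Complex.exp_ofReal_mul_I_im φ
    rw [hone, inv_pow, Complex.inv_re]
    have hresq : ((1+e)^2).re = (1+Real.cos φ)^2 - Real.sin φ^2 := by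
      simp [pow_two, Complex.mul_re, Complex.add_re, Complex.add_im, hre, him]
    have hnsq : Complex.normSq ((1+e)^2) = (2*(1+Real.cos φ))^2 := by
      rw [map_pow]
      have hn2 : Complex.normSq (1+e) = 2*(1+Real.cos φ) := by
        simp [Complex.normSq_apply, Complex.add_re, Complex.add_im, hre, him]
        nlinarith [Real.sin_sq_add_cos_sq φ]
      rw [hn2]
    have hs : Real.sin φ^2 = 1 - Real.cos φ^2 := by
      nlinarith [Real.sin_sq_add_cos_sq φ]
    rw [hresq, hnsq, hs]
    field_simp
    ring
  have hc1 : ContinuousAt (fun r : ℝ => ((1 + (r:ℂ) * e)⁻¹ ^ 2).re) 1 := by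
    apply Complex.continuous_re.continuousAt.comp
    apply ContinuousAt.pow
    apply ContinuousAt.inv₀
    · fun_prop
    · simpa using h1
  have htend : Filter.Tendsto (fun r : ℝ => ((1 + (r:ℂ) * e)⁻¹ ^ 2).re)
      (nhdsWithin 1 (Set.Ioo 0 1)) (nhds (Real.cos φ / (2 * (1 + Real.cos φ)))) := by
    rw [← hF1]
    exact hc1.continuousWithinAt
  exact tendsto_nhdsWithin_congr (fun r hr => (key r hr).symm) htend
end

section
/- Let m ≥ 1 be a natural number and φ a real number with cos(φ/2) ≠ 0. Then as r → 1 from below with r ∈ (0,1), the function r ↦ ∑_{k≥0} (−1)^k · C(k+m−1, k) · r^k · cos(kφ) tends to cos(mφ/2) / (2^m · cos(φ/2)^m). -/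
open Complex Filter

lemma key_factor (φ : ℝ) :
    1 + Complex.exp (φ * I) = 2 * (Real.cos (φ / 2) : ℂ) * Complex.exp ((φ / 2 : ℝ) * I) := by
  rw [Complex.ofReal_cos, Complex.two_cos, Complex.ofReal_div]
  rw [add_mul, mul_comm (Complex.exp _), ← Complex.exp_add, ← Complex.exp_add]
  ring_nf
  rw [add_comm, Complex.exp_zero]
  norm_num
  congr 1
  ring

lemma key_inv (m : ℕ) (φ : ℝ) (h : Real.cos (φ / 2) ≠ 0) :
    1 / (1 + Complex.exp (φ * I)) ^ m
      = (((2 * Real.cos (φ / 2)) ^ m)⁻¹ : ℝ) * Complex.exp ((-(m * φ / 2) : ℝ) * I) := by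
  rw [key_factor φ]
  have h2 : (2 * (Real.cos (φ / 2) : ℂ)) ≠ 0 := by
    exact mul_ne_zero two_ne_zero (Complex.ofReal_ne_zero.2 h)
  have he : Complex.exp ((φ / 2 : ℝ) * I) ^ m = Complex.exp ((m * φ / 2 : ℝ) * I) := by
    rw [← Complex.exp_nat_mul]
    push_cast
    ring_nf
  rw [mul_pow, he, Complex.ofReal_neg, neg_mul, Complex.exp_neg]
  rw [Complex.ofReal_cos] at h2 ⊢
  push_cast
  field_simp

lemma sum_rep (m : ℕ) (hm : 1 ≤ m) (φ : ℝ) (r : ℝ) (hr : r ∈ Set.Ioo (0:ℝ) 1) :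
    ∑' k : ℕ, (-1 : ℝ) ^ k * ((k + m - 1).choose k : ℝ) * r ^ k * Real.cos (k * φ)
      = (1 / (1 + (r : ℂ) * Complex.exp (φ * I)) ^ m).re := by
  set z : ℂ := -((r : ℂ) * Complex.exp (φ * I)) with hz
  have hnz : ‖z‖ < 1 := by
    rw [hz]
    rw [norm_neg, norm_mul,
      Complex.norm_exp_ofReal_mul_I, Complex.norm_real, Real.norm_eq_abs]
    rw [abs_of_pos hr.1]
    simpa using hr.2
  have H := Complex.hasSum_re (hasSum_choose_mul_geometric_of_norm_lt_one (m - 1) hnz)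
  have hm1 : m - 1 + 1 = m := Nat.succ_pred_eq_of_pos hm
  rw [hm1] at H
  have h1z : 1 - z = 1 + (r : ℂ) * Complex.exp (φ * I) := by rw [hz]; ring
  rw [h1z] at H
  have hterm : ∀ n : ℕ, ((((n + (m-1)).choose (m-1) : ℂ)) * z ^ n).re
      = (-1 : ℝ) ^ n * ((n + m - 1).choose n : ℝ) * r ^ n * Real.cos (n * φ) := by
    intro n
    have hc : (n + (m-1)).choose (m-1) = (n + m - 1).choose n := by
      have h1 : n + (m - 1) = n + m - 1 := by omega
      rw [h1, ← Nat.choose_symm (show n ≤ n + m - 1 by omega)]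
      congr 1; omega
    have hzn : z ^ n = ((-1:ℝ) ^ n * r ^ n : ℝ) * Complex.exp ((n * φ : ℝ) * I) := by
      rw [hz, neg_pow, mul_pow, ← Complex.exp_nat_mul]
      push_cast
      ring_nf
    rw [hzn, hc]
    rw [show (((n + m - 1).choose n : ℂ)) * (((-1:ℝ) ^ n * r ^ n : ℝ) * Complex.exp ((n * φ : ℝ) * I))
        = ((((n + m - 1).choose n : ℝ)) * ((-1:ℝ) ^ n * r ^ n) : ℝ) * Complex.exp ((n * φ : ℝ) * I) by
      push_cast; ring]
    rw [Complex.re_ofReal_mul, Complex.exp_ofReal_mul_I_re]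
    ring
  rw [← (H.congr_fun (fun n => (hterm n).symm)).tsum_eq]

theorem abel_sum_neg_int_binomial_cos (m : ℕ) (hm : 1 ≤ m) (φ : ℝ)
    (h : Real.cos (φ / 2) ≠ 0) :
    Filter.Tendsto
      (fun r : ℝ =>
        ∑' k : ℕ, (-1 : ℝ) ^ k * ((k + m - 1).choose k : ℝ) * r ^ k * Real.cos (k * φ))
      (nhdsWithin 1 (Set.Ioo 0 1))
      (nhds (Real.cos (m * φ / 2) / (2 ^ m * Real.cos (φ / 2) ^ m))) := by
  set g : ℝ → ℝ := fun r => (1 / (1 + (r : ℂ) * Complex.exp (φ * I)) ^ m).re with hg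
  have hne : (1 + Complex.exp (φ * I)) ≠ 0 := by
    rw [key_factor φ]
    exact mul_ne_zero (mul_ne_zero two_ne_zero (Complex.ofReal_ne_zero.2 h))
      (Complex.exp_ne_zero _)
  have hcont : ContinuousAt g 1 := by
    apply Complex.continuous_re.continuousAt.comp
    apply ContinuousAt.div continuousAt_const
    · exact (ContinuousAt.add continuousAt_const
        ((Complex.continuous_ofReal.continuousAt).mul continuousAt_const)).pow m
    · apply pow_ne_zero
      simpa using hne
  have hval : g 1 = Real.cos (m * φ / 2) / (2 ^ m * Real.cos (φ / 2) ^ m) := by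
    rw [hg]
    simp only [Complex.ofReal_one, one_mul]
    rw [key_inv m φ h, Complex.re_ofReal_mul, Complex.exp_ofReal_mul_I_re, Real.cos_neg]
    rw [mul_pow]
    field_simp
  have := hcont.continuousWithinAt (s := Set.Ioo (0:ℝ) 1)
  rw [ContinuousWithinAt, hval] at this
  apply this.congr'
  filter_upwards [self_mem_nhdsWithin] with r hr
  exact (sum_rep m hm φ r hr).symm
end

section
/- Let n > 0 be a real number, define the generalized binomial coefficient B(n,k) = (∏_{j=0}^{k−1} (n − j)) / k! for k ∈ ℕ, and let φ ∈ (−π, π). Then the series ∑_{k≥0} B(n,k)·cos(kφ) has sum 2^n · cos(φ/2)^n · cos(nφ/2) (in the sense of HasSum). -/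
open Complex Finset

noncomputable def bcoef (n : ℝ) (k : ℕ) : ℝ := (∏ j ∈ Finset.range k, (n - j)) / k.factorial

lemma bcoef_zero (n : ℝ) : bcoef n 0 = 1 := by simp [bcoef]

lemma bcoef_succ (n : ℝ) (k : ℕ) : (k + 1 : ℝ) * bcoef n (k+1) = (n - k) * bcoef n k := by
  have hk : (k.factorial : ℝ) ≠ 0 := Nat.cast_ne_zero.mpr k.factorial_ne_zero
  have hk1 : ((k+1 : ℕ) : ℝ) ≠ 0 := Nat.cast_ne_zero.mpr (Nat.succ_ne_zero k)
  simp only [bcoef, Finset.prod_range_succ, Nat.factorial_succ]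
  push_cast
  field_simp

lemma bcoef_abs_succ_le {n : ℝ} {k : ℕ} (h : n ≤ k) :
    (k + 1 : ℝ) * |bcoef n (k+1)| = (k - n) * |bcoef n k| := by
  have := bcoef_succ n k
  have h1 : |((k:ℝ) + 1) * bcoef n (k+1)| = |(n - k) * bcoef n k| := by rw [this]
  rw [abs_mul, abs_mul, abs_of_pos (by positivity : (0:ℝ) < (k:ℝ)+1)] at h1
  rw [h1, abs_of_nonpos (by linarith : n - (k:ℝ) ≤ 0)]
  ring

lemma bcoef_abs_bounded {n : ℝ} (hn : 0 < n) : ∃ C : ℝ, ∀ k, |bcoef n k| ≤ C := by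
  set K := ⌈n⌉₊ with hK
  refine ⟨∑ j ∈ Finset.range (K+1), |bcoef n j|, fun k => ?_⟩
  induction k with
  | zero =>
      exact Finset.single_le_sum (f := fun j => |bcoef n j|) (fun j _ => abs_nonneg _)
        (Finset.mem_range.mpr (Nat.succ_pos K))
  | succ m ih =>
      rcases lt_or_ge (m+1) (K+1) with hm | hm
      · exact Finset.single_le_sum (f := fun j => |bcoef n j|) (fun j _ => abs_nonneg _)
          (Finset.mem_range.mpr hm)
      · have hmn : n ≤ m := le_trans (Nat.le_ceil n) (by exact_mod_cast Nat.lt_succ_iff.mp hm)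
        have h2 := bcoef_abs_succ_le hmn
        have hmul : ((m:ℝ)+1) * |bcoef n (m+1)| ≤ ((m:ℝ)+1) * |bcoef n m| := by
          rw [h2]; nlinarith [abs_nonneg (bcoef n m)]
        have : |bcoef n (m+1)| ≤ |bcoef n m| :=
          le_of_mul_le_mul_left hmul (by positivity)
        exact this.trans ih

lemma bcoef_abs_summable {n : ℝ} (hn : 0 < n) : Summable (fun k => |bcoef n k|) := by
  set K := ⌈n⌉₊ with hK
  rw [← summable_nat_add_iff K]
  set g : ℕ → ℝ := fun j => ((j + K : ℕ) : ℝ) * |bcoef n (j + K)| with hg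
  have key : ∀ i : ℕ, n * |bcoef n (i + K)| = g i - g (i+1) := by
    intro i
    have hmn : n ≤ ((i + K : ℕ) : ℝ) := le_trans (Nat.le_ceil n)
      (by exact_mod_cast Nat.le_add_left K i)
    have h2 := bcoef_abs_succ_le (k := i + K) hmn
    have h4 : i + 1 + K = i + K + 1 := by omega
    simp only [hg, h4]
    push_cast at h2 ⊢
    linarith
  apply summable_of_sum_range_le (c := g 0 / n) (fun i => abs_nonneg _)
  intro m
  have tele : ∑ i ∈ Finset.range m, n * |bcoef n (i + K)| = g 0 - g m := by
    rw [Finset.sum_congr rfl (fun i _ => key i)]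
    exact Finset.sum_range_sub' g m
  have hgm : 0 ≤ g m := by positivity
  have h5 : n * ∑ i ∈ Finset.range m, |bcoef n (i + K)| ≤ g 0 := by
    rw [Finset.mul_sum]; rw [tele]; linarith
  rw [le_div_iff₀ hn]
  linarith [h5]

lemma bcoef_disk_hasSum {n : ℝ} (hn : 0 < n) {w : ℂ} (hw : ‖w‖ < 1) :
    HasSum (fun k => (bcoef n k : ℂ) * w ^ k) ((1 + w) ^ (n : ℂ)) := by
  obtain ⟨C, hC⟩ := bcoef_abs_bounded hn
  have hC0 : (0:ℝ) < C := lt_of_lt_of_le one_pos (by simpa [bcoef_zero] using hC 0)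
  set r : ℝ := (‖w‖ + 1) / 2 with hr
  have hr0 : 0 < r := by positivity
  have hr1 : r < 1 := by simp only [hr]; linarith
  have hwr : ‖w‖ < r := by simp only [hr]; linarith
  set t : Set ℂ := Metric.ball (0:ℂ) r with ht
  have htm : ∀ z ∈ t, ‖z‖ < r := by
    intro z hz; simpa [ht, Metric.mem_ball, dist_eq_norm] using hz
  -- the function and its candidate derivative
  set g : ℕ → ℂ → ℂ := fun k z => (bcoef n k : ℂ) * z ^ k with hgdef
  set g' : ℕ → ℂ → ℂ := fun k z => (bcoef n k : ℂ) * ((k : ℂ) * z ^ (k - 1)) with hg'def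
  set u : ℕ → ℝ := fun k => C / r * ((k : ℝ) ^ 1 * r ^ k) with hu
  have hu_sum : Summable u :=
    (summable_pow_mul_geometric_of_norm_lt_one 1 (r := r) (by rwa [Real.norm_of_nonneg hr0.le])).mul_left _
  have hgd : ∀ k z, HasDerivAt (g k) (g' k z) z := by
    intro k z
    simpa [hgdef, hg'def] using (hasDerivAt_pow k z).const_mul (bcoef n k : ℂ)
  have hg'b : ∀ k z, z ∈ t → ‖g' k z‖ ≤ u k := by
    intro k z hz
    rcases Nat.eq_zero_or_pos k with rfl | hk
    · simp [hg'def, hu]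
    · have hz' := htm z hz
      have h1 : ‖g' k z‖ ≤ C * ((k:ℝ) * r ^ (k-1)) := by
        simp only [hg'def, norm_mul, Complex.norm_natCast, Complex.norm_real, Real.norm_eq_abs]
        gcongr
        · exact hC k
        · rw [norm_pow]
          exact pow_le_pow_left₀ (norm_nonneg _) hz'.le _
      refine h1.trans ?_
      have hk1 : r ^ (k - 1) = r ^ k / r := by
        rw [eq_div_iff hr0.ne', ← pow_succ]
        congr 1; omega
      rw [hu, hk1]
      ring_nf
      apply le_of_eq; ring
  have hg0 : Summable fun k => g k 0 := by
    apply summable_of_ne_finset_zero (s := {0})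
    intro k hk
    simp only [Finset.mem_singleton] at hk
    simp [hgdef, zero_pow hk]
  have h0t : (0:ℂ) ∈ t := by simp [ht, hr0]
  -- sums and derivative
  set F : ℂ → ℂ := fun z => ∑' k, g k z with hF
  have hFd : ∀ z ∈ t, HasDerivAt F (∑' k, g' k z) z := by
    intro z hz
    exact hasDerivAt_tsum_of_isPreconnected hu_sum Metric.isOpen_ball
      (convex_ball _ _).isPreconnected (fun k y _ => hgd k y) (fun k y hy => hg'b k y hy) h0t hg0 hz
  -- summability of various series at z ∈ t
  have hS1 : ∀ z ∈ t, Summable (fun k => g k z) := by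
    intro z hz
    apply Summable.of_norm_bounded (g := fun k => C * r ^ k)
      ((summable_geometric_of_lt_one hr0.le hr1).mul_left C)
    intro k
    simp only [hgdef, norm_mul, Complex.norm_real, Real.norm_eq_abs]
    gcongr
    · exact hC k
    · rw [norm_pow]
      exact pow_le_pow_left₀ (norm_nonneg _) (htm z hz).le _
  have hS2 : ∀ z ∈ t, Summable (fun k => g' k z) := by
    intro z hz
    exact Summable.of_norm_bounded (g := u) hu_sum (fun k => hg'b k z hz)
  -- the ODE: (1+z) * D z = n * F z on t
  have hODE : ∀ z ∈ t, (1 + z) * (∑' k, g' k z) = (n : ℂ) * F z := by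
    intro z hz
    have hs2 := hS2 z hz
    have hs1 := hS1 z hz
    have hzg' : (∑' k, g' k z) * z = ∑' k : ℕ, (k : ℂ) * (bcoef n k : ℂ) * z ^ k := by
      rw [← tsum_mul_right]
      apply tsum_congr
      intro k
      rcases Nat.eq_zero_or_pos k with rfl | hk
      · simp [hg'def]
      · have hp : z ^ (k-1) * z = z ^ k := by
          rw [← pow_succ]; congr 1; omega
        calc (bcoef n k : ℂ) * ((k:ℂ) * z^(k-1)) * z
            = (k:ℂ) * (bcoef n k : ℂ) * (z^(k-1) * z) := by ring
          _ = (k:ℂ) * (bcoef n k : ℂ) * z ^ k := by rw [hp]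
    have hshift : (∑' k, g' k z) = ∑' k : ℕ, ((n : ℂ) - (k:ℕ)) * (bcoef n k : ℂ) * z ^ k := by
      rw [Summable.tsum_eq_zero_add hs2]
      have h0 : g' 0 z = 0 := by simp [hg'def]
      rw [h0, zero_add]
      apply tsum_congr
      intro k
      have hb := bcoef_succ n k
      have hbC : ((k:ℂ)+1) * (bcoef n (k+1) : ℂ) = ((n:ℂ) - k) * (bcoef n k : ℂ) := by
        exact_mod_cast congrArg (Complex.ofReal) hb
      have hp : (k + 1) - 1 = k := rfl
      calc g' (k+1) z = (((k:ℂ)+1) * (bcoef n (k+1) : ℂ)) * z ^ k := by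
            simp only [hg'def, hp]; push_cast; ring
        _ = ((n:ℂ) - k) * (bcoef n k : ℂ) * z ^ k := by rw [hbC]
    have hA : Summable (fun k : ℕ => (k:ℂ) * (bcoef n k:ℂ) * z^k) := by
      apply (hs2.mul_right z).congr
      intro k
      rcases Nat.eq_zero_or_pos k with rfl | hk
      · simp [hg'def]
      · have hp : z ^ (k-1) * z = z ^ k := by
          rw [← pow_succ]; congr 1; omega
        calc (bcoef n k : ℂ) * ((k:ℂ) * z^(k-1)) * z
            = (k:ℂ) * (bcoef n k : ℂ) * (z^(k-1) * z) := by ring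
          _ = (k:ℂ) * (bcoef n k : ℂ) * z ^ k := by rw [hp]
    have hB : Summable (fun k : ℕ => ((n:ℂ) - (k:ℕ)) * (bcoef n k:ℂ) * z^k) := by
      apply ((hs1.mul_left (n:ℂ)).sub hA).congr
      intro k
      simp only [hgdef]
      ring
    calc (1 + z) * (∑' k, g' k z) = (∑' k, g' k z) + (∑' k, g' k z) * z := by ring
      _ = (∑' k : ℕ, ((n:ℂ)-(k:ℕ)) * (bcoef n k:ℂ) * z^k) + ∑' k : ℕ, (k:ℂ) * (bcoef n k:ℂ) * z^k := by
          rw [hzg', ← hshift]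
      _ = ∑' k : ℕ, (((n:ℂ)-(k:ℕ)) * (bcoef n k:ℂ) * z^k + (k:ℂ) * (bcoef n k:ℂ) * z^k) :=
          (Summable.tsum_add hB hA).symm
      _ = ∑' k : ℕ, (n:ℂ) * ((bcoef n k:ℂ) * z^k) := tsum_congr (fun k => by ring)
      _ = (n:ℂ) * F z := by rw [tsum_mul_left]
  -- slit plane membership
  have hslit : ∀ z ∈ t, (1 : ℂ) + z ∈ Complex.slitPlane := by
    intro z hz
    apply Complex.mem_slitPlane_iff.mpr
    left
    have h1 : |z.re| ≤ ‖z‖ := Complex.abs_re_le_norm z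
    have h2 := htm z hz
    simp only [Complex.add_re, Complex.one_re]
    have := abs_le.mp h1
    linarith [this.1]
  set c : ℂ := -(n:ℂ) with hc
  set P : ℂ → ℂ := fun z => (1 + z) ^ c with hP
  have hGd : ∀ z ∈ t, HasDerivAt (fun y => F y * P y) 0 z := by
    intro z hz
    have h1z : (1:ℂ) + z ≠ 0 := Complex.slitPlane_ne_zero (hslit z hz)
    have haff : HasDerivAt (fun y : ℂ => 1 + y) 1 z := by
      simpa using (hasDerivAt_id z).const_add (1:ℂ)
    have hPd : HasDerivAt P (c * (1+z) ^ (c - 1) * 1) z :=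
      haff.cpow_const (hslit z hz)
    have hprod := (hFd z hz).mul hPd
    refine hprod.congr_deriv (Eq.symm ?_)
    have hkey : (1+z) ^ c = (1+z) ^ (c-1) * (1+z) := by
      conv_lhs => rw [show c = (c-1) + 1 by ring]
      rw [Complex.cpow_add _ _ h1z, Complex.cpow_one]
    have hode := hODE z hz
    simp only [hP]
    rw [hkey, hc]
    linear_combination (-(((1:ℂ)+z) ^ ((-(n:ℂ))-1))) * hode
  have hconst : ∀ z ∈ t, F z * P z = F 0 * P 0 := by
    intro z hz
    apply (convex_ball (0:ℂ) r).is_const_of_fderivWithin_eq_zero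
      (fun y hy => ((hGd y hy).differentiableAt).differentiableWithinAt) ?_ hz h0t
    intro y hy
    rw [fderivWithin_of_isOpen Metric.isOpen_ball hy, (hGd y hy).hasFDerivAt.fderiv]
    ext v
    simp
  have hF0 : F 0 = 1 := by
    show (∑' k : ℕ, g k 0) = 1
    rw [tsum_eq_single 0 ?_]
    · simp [hgdef, bcoef_zero]
    · intro k hk; simp [hgdef, zero_pow hk]
  have hP0 : P 0 = 1 := by simp [hP]
  have hwt : w ∈ t := by
    simp only [ht, Metric.mem_ball, dist_zero_right]
    exact hwr
  have hmain : F w = (1 + w) ^ (n:ℂ) := by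
    have h1 := hconst w hwt
    rw [hF0, hP0, mul_one] at h1
    have h1w : (1:ℂ) + w ≠ 0 := Complex.slitPlane_ne_zero (hslit w hwt)
    have hne : ((1:ℂ)+w) ^ ((n:ℂ)) ≠ 0 := by
      intro h
      rcases (Complex.cpow_eq_zero_iff _ _).mp h with ⟨h', _⟩
      exact h1w h'
    have hPw : P w = (((1:ℂ)+w) ^ (n:ℂ))⁻¹ := by simp only [hP, hc]; exact Complex.cpow_neg _ _
    rw [hPw] at h1
    field_simp at h1
    exact h1
  rw [← hmain]
  exact (hS1 w hwt).hasSum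

lemma bcoef_boundary_hasSum {n : ℝ} (hn : 0 < n) {z : ℂ} (hz : ‖z‖ = 1)
    (hslit : 1 + z ∈ Complex.slitPlane) :
    HasSum (fun k : ℕ => (bcoef n k : ℂ) * z ^ k) ((1 + z) ^ (n : ℂ)) := by
  have hsum : ∀ w : ℂ, ‖w‖ ≤ 1 → Summable (fun k : ℕ => (bcoef n k : ℂ) * w ^ k) := by
    intro w hw
    apply Summable.of_norm_bounded (g := fun k => |bcoef n k|) (bcoef_abs_summable hn)
    intro k
    rw [norm_mul, norm_pow, Complex.norm_real, Real.norm_eq_abs]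
    calc |bcoef n k| * ‖w‖ ^ k ≤ |bcoef n k| * 1 ^ k := by gcongr
      _ = |bcoef n k| := by simp
  set Fb : ℂ → ℂ := fun w => ∑' k : ℕ, (bcoef n k : ℂ) * w ^ k with hFb
  have hcont : ContinuousOn Fb (Metric.closedBall (0:ℂ) 1) := by
    apply continuousOn_tsum (u := fun k => |bcoef n k|)
      (fun k => (Continuous.continuousOn (by continuity))) (bcoef_abs_summable hn)
    intro k w hw
    rw [Metric.mem_closedBall, dist_zero_right] at hw
    rw [norm_mul, norm_pow, Complex.norm_real, Real.norm_eq_abs]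
    calc |bcoef n k| * ‖w‖ ^ k ≤ |bcoef n k| * 1 ^ k := by gcongr
      _ = |bcoef n k| := by simp
  have hzmem : z ∈ Metric.closedBall (0:ℂ) 1 := by
    simp [Metric.mem_closedBall, dist_zero_right, hz]
  have hIoo : Set.Ioo (0:ℝ) 1 ∈ nhdsWithin (1:ℝ) (Set.Iio 1) :=
    Ioo_mem_nhdsLT_of_mem (by constructor <;> norm_num)
  -- L1 : composition limit towards Fb z
  have hp : Filter.Tendsto (fun x : ℝ => (x:ℂ) * z) (nhdsWithin 1 (Set.Iio 1))
      (nhdsWithin z (Metric.closedBall (0:ℂ) 1)) := by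
    rw [tendsto_nhdsWithin_iff]
    constructor
    · have : Filter.Tendsto (fun x : ℝ => (x:ℂ) * z) (nhds 1) (nhds ((1:ℂ) * z)) :=
        (Complex.continuous_ofReal.mul continuous_const).tendsto 1
      simpa using this.mono_left nhdsWithin_le_nhds
    · filter_upwards [hIoo] with x hx
      rw [Metric.mem_closedBall, dist_zero_right, norm_mul, Complex.norm_real,
        Real.norm_eq_abs, hz, mul_one, abs_of_pos hx.1]
      exact hx.2.le
  have L1 : Filter.Tendsto (fun x : ℝ => Fb ((x:ℂ) * z)) (nhdsWithin 1 (Set.Iio 1))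
      (nhds (Fb z)) := (hcont z hzmem).tendsto.comp hp
  -- L2 : the cpow limit
  have L2 : Filter.Tendsto (fun x : ℝ => ((1:ℂ) + (x:ℂ) * z) ^ (n:ℂ))
      (nhdsWithin 1 (Set.Iio 1)) (nhds ((1 + z) ^ (n:ℂ))) := by
    have hb : Filter.Tendsto (fun x : ℝ => (1:ℂ) + (x:ℂ) * z) (nhds 1) (nhds (1 + z)) := by
      have : Filter.Tendsto (fun x : ℝ => (1:ℂ) + (x:ℂ) * z) (nhds 1)
          (nhds ((1:ℂ) + (1:ℂ) * z)) :=
        (continuous_const.add (Complex.continuous_ofReal.mul continuous_const)).tendsto 1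
      simpa using this
    exact ((continuousAt_cpow_const hslit).tendsto.comp hb).mono_left nhdsWithin_le_nhds
  -- they agree on (0,1)
  have heq : (fun x : ℝ => Fb ((x:ℂ) * z)) =ᶠ[nhdsWithin 1 (Set.Iio 1)]
      (fun x : ℝ => ((1:ℂ) + (x:ℂ) * z) ^ (n:ℂ)) := by
    filter_upwards [hIoo] with x hx
    have hxw : ‖(x:ℂ) * z‖ < 1 := by
      rw [norm_mul, Complex.norm_real, Real.norm_eq_abs, hz, mul_one, abs_of_pos hx.1]
      exact hx.2
    exact (bcoef_disk_hasSum hn hxw).tsum_eq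
  have hkey : Fb z = (1 + z) ^ (n:ℂ) :=
    tendsto_nhds_unique (L1.congr' heq) L2
  have h2 : (∑' k : ℕ, (bcoef n k:ℂ) * z ^ k) = (1 + z) ^ (n:ℂ) := hkey
  have := (hsum z hz.le).hasSum
  rwa [h2] at this

theorem binomial_series_cos (n : ℝ) (hn : 0 < n) (φ : ℝ) (hφ : φ ∈ Set.Ioo (-Real.pi) Real.pi) :
    HasSum
      (fun k : ℕ => ((∏ j ∈ Finset.range k, (n - j)) / k.factorial) * Real.cos (k * φ))
      ((2 : ℝ) ^ n * Real.cos (φ / 2) ^ n * Real.cos (n * φ / 2)) := by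
  obtain ⟨hφ1, hφ2⟩ := hφ
  have hpi := Real.pi_pos
  have hcos : 0 < Real.cos (φ/2) :=
    Real.cos_pos_of_mem_Ioo ⟨by linarith, by linarith⟩
  set z : ℂ := Complex.exp (↑φ * Complex.I) with hzdef
  have hz1 : ‖z‖ = 1 := by
    simp [hzdef, Complex.norm_exp_ofReal_mul_I]
  set R : ℝ := 2 * Real.cos (φ/2) with hRdef
  have hR0 : 0 < R := by positivity
  have hcos_sq : Real.cos (φ/2) ^ 2 = 1/2 + Real.cos φ / 2 := by
    have := Real.cos_sq (φ/2)
    rwa [show 2*(φ/2) = φ by ring] at this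
  have hsin2 : Real.sin φ = 2 * Real.sin (φ/2) * Real.cos (φ/2) := by
    have := Real.sin_two_mul (φ/2)
    rw [show 2*(φ/2) = φ by ring] at this
    linarith
  have h1z : (1:ℂ) + z = Complex.exp (↑(Real.log R) + ↑(φ/2) * Complex.I) := by
    rw [Complex.exp_add, ← Complex.ofReal_exp, Real.exp_log hR0]
    apply Complex.ext
    · simp only [Complex.add_re, Complex.one_re, hzdef, Complex.exp_ofReal_mul_I_re,
        Complex.re_ofReal_mul, hRdef]
      nlinarith [hcos_sq]
    · simp only [Complex.add_im, Complex.one_im, hzdef, Complex.exp_ofReal_mul_I_im,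
        Complex.im_ofReal_mul, hRdef]
      linarith [hsin2]
  have hne : (1:ℂ) + z ≠ 0 := by rw [h1z]; exact Complex.exp_ne_zero _
  have hslit : (1:ℂ) + z ∈ Complex.slitPlane := by
    apply Complex.mem_slitPlane_iff.mpr
    left
    simp only [Complex.add_re, Complex.one_re, hzdef, Complex.exp_ofReal_mul_I_re]
    nlinarith [hcos_sq, hcos]
  have hlog : Complex.log (1+z) = ↑(Real.log R) + ↑(φ/2) * Complex.I := by
    rw [h1z]
    apply Complex.log_exp
    · simp only [Complex.add_im, Complex.ofReal_im, Complex.im_ofReal_mul, Complex.I_im,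
        Complex.mul_im, Complex.ofReal_re, Complex.I_re]
      linarith
    · simp only [Complex.add_im, Complex.ofReal_im, Complex.im_ofReal_mul, Complex.I_im,
        Complex.mul_im, Complex.ofReal_re, Complex.I_re]
      linarith
  have hpow : ((1:ℂ)+z) ^ (n:ℂ) = ↑(R ^ n) * Complex.exp (↑(n * (φ/2)) * Complex.I) := by
    rw [Complex.cpow_def_of_ne_zero hne, hlog, Real.rpow_def_of_pos hR0,
      Complex.ofReal_exp, ← Complex.exp_add]
    congr 1
    push_cast
    ring
  have H2 := Complex.hasSum_re (bcoef_boundary_hasSum hn hz1 hslit)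
  have hterm : ∀ k : ℕ, ((bcoef n k : ℂ) * z ^ k).re = bcoef n k * Real.cos (k * φ) := by
    intro k
    have hzk : z ^ k = Complex.exp (↑((k:ℝ) * φ) * Complex.I) := by
      rw [hzdef, ← Complex.exp_nat_mul]
      congr 1
      push_cast
      ring
    rw [hzk, Complex.re_ofReal_mul, Complex.exp_ofReal_mul_I_re]
  have hval : (((1:ℂ)+z) ^ (n:ℂ)).re = (2:ℝ)^n * Real.cos (φ/2)^n * Real.cos (n*φ/2) := by
    rw [hpow, Complex.re_ofReal_mul, Complex.exp_ofReal_mul_I_re, hRdef,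
      Real.mul_rpow (by norm_num) hcos.le]
    rw [show n * (φ/2) = n*φ/2 by ring]
  simp only [hterm, hval] at H2
  simpa only [bcoef] using H2
end

section
/- Define B(1/2, k) = (∏_{j=0}^{k−1} (1/2 − j)) / k! for k ∈ ℕ. Then ∑_{k≥0} B(1/2, k) = √2, i.e. 1 + 1/2 − (1·1)/(2·4) + (1·1·3)/(2·4·6) − (1·1·3·5)/(2·4·6·8) + ⋯ = √2. -/
open Finset Polynomial

private lemma smeval_descPoch (x : ℝ) (k : ℕ) :
    (descPochhammer ℤ k).smeval x = ∏ j ∈ Finset.range k, (x - j) := by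
  induction k with
  | zero => simp
  | succ n ih =>
    rw [descPochhammer_succ_right, smeval_mul, ih, Finset.prod_range_succ]
    congr 1
    simp [smeval_sub, smeval_X, smeval_natCast]

private lemma choose_half (k : ℕ) :
    Ring.choose ((1:ℝ)/2) k = (∏ j ∈ Finset.range k, ((1 : ℝ) / 2 - j)) / k.factorial := by
  have h := Ring.descPochhammer_eq_factorial_smul_choose ((1:ℝ)/2) k
  rw [smeval_descPoch] at h
  rw [eq_div_iff (by positivity : (k.factorial : ℝ) ≠ 0), h, nsmul_eq_mul, mul_comm]

private lemma prod_sq_le (k : ℕ) :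
    (∏ j ∈ Finset.range k, (((j:ℝ) + 1 - 1/2) / ((j:ℝ)+1)))^2 ≤ 1/((k:ℝ)+1) := by
  induction k with
  | zero => norm_num
  | succ n ih =>
    rw [Finset.prod_range_succ, mul_pow]
    have hc : (((n:ℝ) + 1 - 1/2) / ((n:ℝ)+1))^2 ≥ 0 := sq_nonneg _
    have h1 : (∏ j ∈ Finset.range n, (((j:ℝ) + 1 - 1/2) / ((j:ℝ)+1)))^2 *
        (((n:ℝ) + 1 - 1/2) / ((n:ℝ)+1))^2 ≤ (1/((n:ℝ)+1)) * (((n:ℝ) + 1 - 1/2) / ((n:ℝ)+1))^2 :=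
      mul_le_mul_of_nonneg_right ih hc
    refine h1.trans ?_
    have hn : (0:ℝ) < (n:ℝ) + 1 := by positivity
    rw [div_pow, one_div_mul_eq_div, div_div, div_le_div_iff₀ (by positivity) (by positivity)]
    push_cast
    ring_nf
    nlinarith [Nat.cast_nonneg (α := ℝ) n]

private noncomputable def a (k : ℕ) : ℝ :=
    (∏ j ∈ Finset.range k, ((1 : ℝ) / 2 - j)) / k.factorial

private lemma abs_a_le (k : ℕ) :
    |a (k+1)| ≤ 1/(2*((k:ℝ)+1)*Real.sqrt ((k:ℝ)+1)) := by
  have hfac : ((k+1).factorial : ℝ) = ((k:ℝ)+1) * ∏ j ∈ Finset.range k, ((j:ℝ)+1) := by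
    induction k with
    | zero => simp
    | succ n ih =>
      rw [Finset.prod_range_succ, Nat.factorial_succ]
      push_cast
      rw [ih]
      ring
  have hterm : ∀ j : ℕ, |(1:ℝ)/2 - ((j+1:ℕ):ℝ)| = (j:ℝ)+1-1/2 := by
    intro j
    rw [abs_of_nonpos (by push_cast; linarith [Nat.cast_nonneg (α := ℝ) j])]
    push_cast; ring
  have hprod_abs : ∏ j ∈ Finset.range (k+1), |(1:ℝ)/2 - (j:ℝ)| =
      (1/2) * ∏ j ∈ Finset.range k, ((j:ℝ)+1-1/2) := by
    rw [Finset.prod_range_succ']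
    rw [Finset.prod_congr rfl (fun j _ => hterm j)]
    norm_num [mul_comm]
  have habs : |a (k+1)| =
      (1/2) * (∏ j ∈ Finset.range k, ((j:ℝ) + 1 - 1/2)) / ((k+1).factorial : ℝ) := by
    rw [a, abs_div, abs_of_nonneg (by positivity : (0:ℝ) ≤ ((k+1).factorial : ℝ)),
      Finset.abs_prod, hprod_abs]
  have hq : (∏ j ∈ Finset.range k, (((j:ℝ) + 1 - 1/2) / ((j:ℝ)+1))) ≤
      1 / Real.sqrt ((k:ℝ)+1) := by
    have hnn : (0:ℝ) ≤ ∏ j ∈ Finset.range k, (((j:ℝ) + 1 - 1/2) / ((j:ℝ)+1)) := by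
      apply Finset.prod_nonneg
      intro j _
      have : (0:ℝ) ≤ (j:ℝ) := Nat.cast_nonneg j
      apply div_nonneg <;> linarith
    have hsq := prod_sq_le k
    have h2 : (1 / Real.sqrt ((k:ℝ)+1))^2 = 1/((k:ℝ)+1) := by
      rw [div_pow, Real.sq_sqrt (by positivity)]; norm_num
    have h3 : (0:ℝ) ≤ 1 / Real.sqrt ((k:ℝ)+1) := by positivity
    nlinarith
  have hprod : (∏ j ∈ Finset.range k, (((j:ℝ) + 1 - 1/2) / ((j:ℝ)+1))) =
      (∏ j ∈ Finset.range k, ((j:ℝ) + 1 - 1/2)) / (∏ j ∈ Finset.range k, ((j:ℝ)+1)) := by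
    rw [Finset.prod_div_distrib]
  have hposP : (0:ℝ) < ∏ j ∈ Finset.range k, ((j:ℝ)+1) := by
    apply Finset.prod_pos; intro j _; positivity
  rw [habs, hfac]
  rw [hprod] at hq
  have hq' : (∏ j ∈ Finset.range k, ((j:ℝ) + 1 - 1/2)) ≤
      (∏ j ∈ Finset.range k, ((j:ℝ)+1)) / Real.sqrt ((k:ℝ)+1) := by
    calc (∏ j ∈ Finset.range k, ((j:ℝ) + 1 - 1/2))
        ≤ 1 / Real.sqrt ((k:ℝ)+1) * (∏ j ∈ Finset.range k, ((j:ℝ)+1)) :=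
          (div_le_iff₀ hposP).mp hq
      _ = (∏ j ∈ Finset.range k, ((j:ℝ)+1)) / Real.sqrt ((k:ℝ)+1) := by
          rw [mul_comm, mul_one_div]
  have hs : (0:ℝ) < Real.sqrt ((k:ℝ)+1) := Real.sqrt_pos.mpr (by positivity)
  rw [div_le_div_iff₀ (by positivity) (by positivity)]
  calc 1/2 * (∏ j ∈ Finset.range k, ((j:ℝ) + 1 - 1/2)) * (2*((k:ℝ)+1)*Real.sqrt ((k:ℝ)+1))
      ≤ 1/2 * ((∏ j ∈ Finset.range k, ((j:ℝ)+1)) / Real.sqrt ((k:ℝ)+1)) *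
        (2*((k:ℝ)+1)*Real.sqrt ((k:ℝ)+1)) := by
        apply mul_le_mul_of_nonneg_right _ (by positivity)
        apply mul_le_mul_of_nonneg_left hq' (by norm_num)
    _ = ((k:ℝ)+1) * (∏ j ∈ Finset.range k, ((j:ℝ)+1)) := by
        field_simp
    _ ≤ 1 * (((k:ℝ)+1) * ∏ j ∈ Finset.range k, ((j:ℝ)+1)) := by rw [one_mul]

private lemma tele_bound (k : ℕ) :
    1/(2*((k:ℝ)+2)*Real.sqrt ((k:ℝ)+2)) ≤
      1/Real.sqrt ((k:ℝ)+1) - 1/Real.sqrt ((k:ℝ)+2) := by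
  set s := Real.sqrt ((k:ℝ)+1) with hs_def
  set t := Real.sqrt ((k:ℝ)+2) with ht_def
  have hs : (0:ℝ) < s := Real.sqrt_pos.mpr (by positivity)
  have ht : (0:ℝ) < t := Real.sqrt_pos.mpr (by positivity)
  have hst : s ≤ t := Real.sqrt_le_sqrt (by linarith)
  have hs2 : s^2 = (k:ℝ)+1 := Real.sq_sqrt (by positivity)
  have ht2 : t^2 = (k:ℝ)+2 := Real.sq_sqrt (by positivity)
  rw [div_sub_div _ _ hs.ne' ht.ne', ← ht2]
  rw [div_le_div_iff₀ (by positivity) (by positivity)]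
  nlinarith [mul_pos hs ht, sq_nonneg (t-s), mul_pos (mul_pos hs ht) ht]

private lemma g_tendsto :
    Filter.Tendsto (fun n : ℕ => 1 / Real.sqrt ((n:ℝ)+1)) Filter.atTop (nhds 0) := by
  have h : (fun n : ℕ => 1 / Real.sqrt ((n:ℝ)+1)) =
      (fun x : ℝ => Real.sqrt x) ∘ (fun n : ℕ => 1/((n:ℝ)+1)) := by
    funext n
    simp [Function.comp, one_div, Real.sqrt_inv]
  rw [h]
  have := (Real.continuous_sqrt.tendsto 0).comp tendsto_one_div_add_atTop_nhds_zero_nat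
  simpa using this

private lemma partial_sum_tele (n : ℕ) :
    ∑ i ∈ Finset.range n, (1/Real.sqrt ((i:ℝ)+1) - 1/Real.sqrt ((i:ℝ)+2)) =
      1 - 1/Real.sqrt ((n:ℝ)+1) := by
  induction n with
  | zero => norm_num
  | succ m ih =>
    rw [Finset.sum_range_succ, ih]
    push_cast
    ring_nf

private lemma tele_summable :
    Summable (fun n : ℕ => 1/Real.sqrt ((n:ℝ)+1) - 1/Real.sqrt ((n:ℝ)+2)) := by
  apply summable_of_sum_range_le (c := 1)
  · intro n
    have h1 : Real.sqrt ((n:ℝ)+1) ≤ Real.sqrt ((n:ℝ)+2) := Real.sqrt_le_sqrt (by linarith)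
    have h2 : (0:ℝ) < Real.sqrt ((n:ℝ)+1) := Real.sqrt_pos.mpr (by positivity)
    have := one_div_le_one_div_of_le h2 h1
    linarith
  · intro n
    rw [partial_sum_tele]
    have h2 : (0:ℝ) < Real.sqrt ((n:ℝ)+1) := Real.sqrt_pos.mpr (by positivity)
    have : 0 ≤ 1/Real.sqrt ((n:ℝ)+1) := by positivity
    linarith

private lemma tele_hasSum :
    HasSum (fun n : ℕ => 1/Real.sqrt ((n:ℝ)+1) - 1/Real.sqrt ((n:ℝ)+2)) 1 := by
  rw [tele_summable.hasSum_iff_tendsto_nat]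
  simp only [partial_sum_tele]
  have h := Filter.Tendsto.const_sub (1:ℝ) g_tendsto
  simpa using h

private lemma abs_a_shift_le (n : ℕ) :
    |a (n+2)| ≤ 1/Real.sqrt ((n:ℝ)+1) - 1/Real.sqrt ((n:ℝ)+2) := by
  have h1 := abs_a_le (n+1)
  have h2 := tele_bound n
  have : ((n+1:ℕ):ℝ) + 1 = (n:ℝ) + 2 := by push_cast; ring
  rw [this] at h1
  exact h1.trans h2

private lemma a_abs_summable : Summable (fun k => |a k|) := by
  rw [← summable_nat_add_iff 2]
  exact Summable.of_nonneg_of_le (fun n => abs_nonneg _) abs_a_shift_le tele_summable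

private lemma a_summable : Summable a := by
  apply Summable.of_abs a_abs_summable

private lemma a_eq_choose (k : ℕ) : a k = Ring.choose ((1:ℝ)/2) k := (choose_half k).symm

private lemma cauchy_coeff (n : ℕ) :
    ∑ ij ∈ Finset.HasAntidiagonal.antidiagonal n, a ij.1 * a ij.2 = (Nat.choose 1 n : ℝ) := by
  have h := Ring.add_choose_eq (r := (1:ℝ)/2) (s := (1:ℝ)/2) n (Commute.all _ _)
  have h12 : (1:ℝ)/2 + 1/2 = ((1:ℕ):ℝ) := by norm_num
  rw [h12, Ring.choose_natCast] at h
  rw [h]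
  exact Finset.sum_congr rfl fun ij _ => by rw [a_eq_choose, a_eq_choose]

private lemma tsum_sq : (∑' k, a k) * (∑' k, a k) = 2 := by
  have hn : Summable (fun k => ‖a k‖) := by simpa [Real.norm_eq_abs] using a_abs_summable
  rw [tsum_mul_tsum_eq_tsum_sum_antidiagonal_of_summable_norm hn hn]
  have : ∀ n, (∑ ij ∈ Finset.HasAntidiagonal.antidiagonal n, a ij.1 * a ij.2) = (Nat.choose 1 n : ℝ) :=
    cauchy_coeff
  rw [tsum_congr this]
  rw [tsum_eq_sum (s := Finset.range 2) (fun b hb => by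
    have : 1 < b := by simpa using hb
    simp [Nat.choose_eq_zero_of_lt this])]
  norm_num [Finset.sum_range_succ]

private lemma a_tsum_pos : 0 < ∑' k, a k := by
  have hsum := a_summable
  have hsplit := Summable.sum_add_tsum_nat_add 2 hsum
  have h01 : ∑ i ∈ Finset.range 2, a i = 3/2 := by
    simp [Finset.sum_range_succ, a]
    norm_num
  have hshift : Summable (fun n => a (n+2)) := (summable_nat_add_iff 2).mpr hsum
  have htail : -(∑' n : ℕ, a (n+2)) ≤ 1 := by
    have h1 : ∑' n : ℕ, -(a (n+2)) ≤ ∑' n : ℕ, (1/Real.sqrt ((n:ℝ)+1) - 1/Real.sqrt ((n:ℝ)+2)) := by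
      apply Summable.tsum_le_tsum _ hshift.neg tele_summable
      intro n
      have := abs_a_shift_le n
      have := neg_abs_le (a (n+2))
      linarith
    rw [tsum_neg] at h1
    rw [tele_hasSum.tsum_eq] at h1
    exact h1
  have := hsplit
  rw [h01] at this
  linarith [this]

theorem binomial_half_sum_sqrt_two :
    HasSum (fun k : ℕ => (∏ j ∈ Finset.range k, ((1 : ℝ) / 2 - j)) / k.factorial)
      (Real.sqrt 2) := by
  have hsum : Summable a := a_summable
  have hval : ∑' k, a k = Real.sqrt 2 := by
    have h2 : (∑' k, a k)^2 = 2 := by rw [sq]; exact tsum_sq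
    rw [← h2, Real.sqrt_sq a_tsum_pos.le]
  have := hsum.hasSum
  rw [hval] at this
  exact this
end

section
/- Define B(1/2, k) = (∏_{j=0}^{k−1} (1/2 − j)) / k! for k ∈ ℕ. Then ∑_{j≥0} (−1)^j · B(1/2, 2j) = √((1 + √2)/2), i.e. 1 + (1·1)/(2·4) − (1·1·3·5)/(2·4·6·8) + (1·1·3·5·7·9)/(2·4·6·8·10·12) − ⋯ = √((1+√2)/2). -/
open Finset Complex Polynomial

noncomputable def Bh (k : ℕ) : ℝ := (∏ i ∈ Finset.range k, ((1 : ℝ) / 2 - i)) / k.factorial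

lemma Bh_zero : Bh 0 = 1 := by simp [Bh]

lemma Bh_succ (k : ℕ) : Bh (k + 1) * (k + 1) = Bh k * (1 / 2 - k) := by
  have h2 : ((k.factorial : ℝ)) ≠ 0 := Nat.cast_ne_zero.mpr k.factorial_ne_zero
  have h1 : ((k:ℝ)+1) ≠ 0 := by positivity
  simp only [Bh, Finset.prod_range_succ, Nat.factorial_succ]
  push_cast
  field_simp

lemma descPochhammer_smeval_prod (r : ℂ) (n : ℕ) :
    (descPochhammer ℤ n).smeval r = ∏ i ∈ Finset.range n, (r - i) := by
  induction n with
  | zero => simp [descPochhammer_zero, Polynomial.smeval_one]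
  | succ n ih =>
    rw [descPochhammer_succ_right, Polynomial.smeval_mul, ih, Finset.prod_range_succ]
    congr 1
    rw [Polynomial.smeval_sub, Polynomial.smeval_X]
    simp [Polynomial.smeval_natCast]

lemma choose_half_s12 (k : ℕ) : (Ring.choose ((1:ℂ)/2) k) = (Bh k : ℂ) := by
  have h := Ring.descPochhammer_eq_factorial_smul_choose ((1:ℂ)/2) k
  rw [descPochhammer_smeval_prod] at h
  have h2 : ((k.factorial : ℂ)) ≠ 0 := Nat.cast_ne_zero.mpr k.factorial_ne_zero
  have hb : (Bh k : ℂ) = (∏ i ∈ Finset.range k, ((1:ℂ)/2 - i)) / k.factorial := by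
    simp only [Bh]
    push_cast
    ring
  rw [hb, h, nsmul_eq_mul]
  field_simp

lemma Bh_conv (n : ℕ) :
    ∑ kl ∈ Finset.HasAntidiagonal.antidiagonal n, (Bh kl.1 : ℂ) * (Bh kl.2 : ℂ) = (Nat.choose 1 n : ℂ) := by
  have h := Ring.add_choose_eq (r := (1:ℂ)/2) (s := (1:ℂ)/2) n (Commute.all _ _)
  have h12 : ((1:ℂ)/2 + 1/2) = ((1:ℕ):ℂ) := by norm_num
  rw [h12, Ring.choose_natCast] at h
  rw [h]
  exact Finset.sum_congr rfl (fun kl _ => by rw [choose_half_s12, choose_half_s12])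

lemma Bh_abs_succ (k : ℕ) (hk : 1 ≤ k) : |Bh (k+1)| * (k+1) = |Bh k| * (k - 1/2) := by
  have hk' : (1:ℝ) ≤ k := by exact_mod_cast hk
  have h : |Bh (k+1) * ((k:ℝ)+1)| = |Bh k * (1/2 - (k:ℝ))| := by rw [Bh_succ]
  rw [abs_mul, abs_mul, _root_.abs_of_nonneg (by positivity : (0:ℝ) ≤ (k:ℝ)+1)] at h
  rwa [abs_sub_comm, _root_.abs_of_nonneg (a := (k:ℝ) - 1/2) (by linarith)] at h

lemma Bh_telescope (j : ℕ) :
    |Bh (j+2)| = 2*(((j:ℝ)+2) * |Bh (j+2)|) - 2*(((j:ℝ)+3) * |Bh (j+3)|) := by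
  have h := Bh_abs_succ (j+2) (by omega)
  push_cast at h
  linarith

lemma Bh_two : |Bh 2| = 1/8 := by
  have : Bh 2 = -(1/8) := by
    simp only [Bh, Finset.prod_range_succ, Finset.prod_range_zero]
    norm_num [Nat.factorial]
  rw [this]
  norm_num

lemma Bh_tail_sum (n : ℕ) : ∑ j ∈ Finset.range n, |Bh (j+2)| ≤ 1/2 := by
  set f : ℕ → ℝ := fun i => 2*(((i:ℝ)+2) * |Bh (i+2)|) with hf
  have hsum : ∑ j ∈ Finset.range n, |Bh (j+2)| = f 0 - f n := by
    rw [← Finset.sum_range_sub' f n]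
    refine Finset.sum_congr rfl fun j _ => ?_
    have := Bh_telescope j
    simp only [hf]
    push_cast
    linarith
  have h0 : f 0 = 1/2 := by simp [hf, Bh_two]; norm_num
  have hn : 0 ≤ f n := by positivity
  linarith

lemma summable_Bh_abs : Summable (fun k => |Bh k|) := by
  rw [← summable_nat_add_iff 2]
  exact summable_of_sum_range_le (fun j => abs_nonneg _) Bh_tail_sum

lemma Bh_tail_tsum : ∑' j, |Bh (j+2)| ≤ 1/2 :=
  Real.tsum_le_of_sum_range_le (fun j => abs_nonneg _) Bh_tail_sum

noncomputable def Fc (k : ℕ) : ℂ := ((Bh k : ℝ) : ℂ) * Complex.I ^ k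

lemma Fc_norm (k : ℕ) : ‖Fc k‖ = |Bh k| := by
  simp [Fc, Complex.norm_real]

lemma summable_Fc_norm : Summable (fun k => ‖Fc k‖) := by
  simpa only [Fc_norm] using summable_Bh_abs

lemma g_sq : (∑' k, Fc k) * (∑' k, Fc k) = 1 + Complex.I := by
  rw [tsum_mul_tsum_eq_tsum_sum_antidiagonal_of_summable_norm summable_Fc_norm summable_Fc_norm]
  have h : ∀ n, ∑ kl ∈ Finset.HasAntidiagonal.antidiagonal n, Fc kl.1 * Fc kl.2
      = (Nat.choose 1 n : ℂ) * Complex.I ^ n := by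
    intro n
    rw [← Bh_conv, Finset.sum_mul]
    refine Finset.sum_congr rfl fun kl hkl => ?_
    have hn : kl.1 + kl.2 = n := Finset.HasAntidiagonal.mem_antidiagonal.mp hkl
    simp only [Fc]
    rw [mul_mul_mul_comm, ← pow_add, hn]
  simp_rw [h]
  rw [tsum_eq_sum (s := Finset.range 2) ?_]
  · simp [Finset.sum_range_succ]
  · intro n hn
    rw [Nat.choose_eq_zero_of_lt (by simpa using hn)]
    simp

lemma Fc_even (j : ℕ) : Fc (2*j) = (((-1)^j * Bh (2*j) : ℝ) : ℂ) := by
  simp only [Fc]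
  rw [pow_mul, Complex.I_sq]
  push_cast
  ring

lemma Fc_odd (j : ℕ) : Fc (2*j+1) = (((-1)^j * Bh (2*j+1) : ℝ) : ℂ) * Complex.I := by
  simp only [Fc]
  rw [pow_succ, pow_mul, Complex.I_sq]
  push_cast
  ring

lemma hasSum_re_even : HasSum (fun j : ℕ => (-1:ℝ)^j * Bh (2*j)) ((∑' k, Fc k).re) := by
  have hF : HasSum Fc (∑' k, Fc k) := summable_Fc_norm.of_norm.hasSum
  have hre : HasSum (fun k => (Fc k).re) ((∑' k, Fc k).re) := by
    simpa using hF.mapL Complex.reCLM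
  have hinj : Function.Injective (fun j : ℕ => 2*j) := fun a b h => by
    simp only [] at h; omega
  have hvan : ∀ k ∉ Set.range (fun j : ℕ => 2*j), ((Fc k).re) = 0 := by
    intro k hk
    obtain ⟨j, rfl⟩ : ∃ j, k = 2*j+1 := by
      rcases Nat.even_or_odd k with he | ho
      · obtain ⟨j, hj⟩ := he
        exact absurd (Set.mem_range.mpr ⟨j, by omega⟩) hk
      · obtain ⟨j, hj⟩ := ho
        exact ⟨j, hj⟩
    rw [Fc_odd, Complex.mul_re, Complex.ofReal_re, Complex.ofReal_im, Complex.I_re, Complex.I_im]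
    ring
  have h := (hinj.hasSum_iff hvan).mpr hre
  have hcong : (fun j : ℕ => (-1:ℝ)^j * Bh (2*j)) = ((fun k => (Fc k).re) ∘ (fun j : ℕ => 2*j)) := by
    funext j
    show (-1:ℝ)^j * Bh (2*j) = (Fc (2*j)).re
    rw [Fc_even, Complex.ofReal_re]
  rw [hcong]
  exact h

lemma hasSum_im_odd : HasSum (fun j : ℕ => (-1:ℝ)^j * Bh (2*j+1)) ((∑' k, Fc k).im) := by
  have hF : HasSum Fc (∑' k, Fc k) := summable_Fc_norm.of_norm.hasSum
  have him : HasSum (fun k => (Fc k).im) ((∑' k, Fc k).im) := by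
    simpa using hF.mapL Complex.imCLM
  have hinj : Function.Injective (fun j : ℕ => 2*j+1) := fun a b h => by
    simp only [] at h; omega
  have hvan : ∀ k ∉ Set.range (fun j : ℕ => 2*j+1), ((Fc k).im) = 0 := by
    intro k hk
    obtain ⟨j, rfl⟩ : ∃ j, k = 2*j := by
      rcases Nat.even_or_odd k with he | ho
      · obtain ⟨j, hj⟩ := he
        exact ⟨j, by omega⟩
      · obtain ⟨j, hj⟩ := ho
        exact absurd (Set.mem_range.mpr ⟨j, by omega⟩) hk
    rw [Fc_even, Complex.ofReal_im]
  have h := (hinj.hasSum_iff hvan).mpr him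
  have hcong : (fun j : ℕ => (-1:ℝ)^j * Bh (2*j+1)) = ((fun k => (Fc k).im) ∘ (fun j : ℕ => 2*j+1)) := by
    funext j
    show (-1:ℝ)^j * Bh (2*j+1) = (Fc (2*j+1)).im
    rw [Fc_odd, Complex.mul_im, Complex.ofReal_im, Complex.ofReal_re, Complex.I_im, Complex.I_re]
    ring
  rw [hcong]
  exact h

set_option maxHeartbeats 1600000 in
theorem binomial_half_even_alternating_sum :
    HasSum
      (fun j : ℕ => (-1 : ℝ) ^ j * ((∏ i ∈ Finset.range (2 * j), ((1 : ℝ) / 2 - i)) / (2 * j).factorial))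
      (Real.sqrt ((1 + Real.sqrt 2) / 2)) := by
  have hS := hasSum_re_even
  have hT := hasSum_im_odd
  set S := (∑' k, Fc k).re with hSdef
  set T := (∑' k, Fc k).im with hTdef
  have hg : ((S:ℂ) + (T:ℂ)*Complex.I) * ((S:ℂ) + (T:ℂ)*Complex.I) = 1 + Complex.I := by
    rw [hSdef, hTdef, Complex.re_add_im]
    exact g_sq
  rw [Complex.ext_iff] at hg
  obtain ⟨h1, h2⟩ := hg
  simp [Complex.mul_re, Complex.mul_im] at h1 h2
  have hsq : (S*S + T*T)^2 = 2 := by nlinarith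
  have hge : (0:ℝ) ≤ S*S + T*T := add_nonneg (mul_self_nonneg S) (mul_self_nonneg T)
  have hST : S*S + T*T = Real.sqrt 2 := by
    rw [show (2:ℝ) = (S*S+T*T)^2 from hsq.symm, Real.sqrt_sq hge]
  have hS2 : S*S = (1 + Real.sqrt 2)/2 := by linarith
  have hSpos : (0:ℝ) ≤ S := by
    have hsummS := hS.summable
    have h01 := Summable.sum_add_tsum_nat_add 1 hsummS
    have hB0 : (fun j : ℕ => (-1:ℝ)^j * Bh (2*j)) 0 = 1 := by simp [Bh_zero]
    have htailnorm : Summable (fun j : ℕ => |(-1:ℝ)^(j+1) * Bh (2*(j+1))|) := by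
      have hsb : Summable (fun k : ℕ => |Bh (k+2)|) := (summable_nat_add_iff 2).mpr summable_Bh_abs
      have h2j : Summable ((fun k : ℕ => |Bh (k+2)|) ∘ (fun j : ℕ => 2*j)) :=
        hsb.comp_injective (fun a b h => by omega)
      refine h2j.congr fun j => ?_
      show |Bh (2*j+2)| = |(-1:ℝ)^(j+1) * Bh (2*(j+1))|
      rw [abs_mul, _root_.abs_pow, abs_neg, abs_one, one_pow, one_mul,
        show 2*(j+1) = 2*j+2 from by omega]
    have htail : |∑' j, (-1:ℝ)^(j+1) * Bh (2*(j+1))| ≤ 1/2 := by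
      calc |∑' j, (-1:ℝ)^(j+1) * Bh (2*(j+1))|
          ≤ ∑' j, |(-1:ℝ)^(j+1) * Bh (2*(j+1))| := by
            have hnt := norm_tsum_le_tsum_norm
              (f := fun j : ℕ => (-1:ℝ)^(j+1) * Bh (2*(j+1)))
              (by simpa only [Real.norm_eq_abs] using htailnorm)
            simpa only [Real.norm_eq_abs] using hnt
        _ ≤ ∑' k, |Bh (k+2)| := by
            refine Summable.tsum_le_tsum_of_inj (fun j : ℕ => 2*j)
              (fun a b h => Nat.eq_of_mul_eq_mul_left two_pos h)
              (fun c _ => abs_nonneg _) (fun j => ?_) htailnorm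
              ((summable_nat_add_iff 2).mpr summable_Bh_abs)
            show |(-1:ℝ)^(j+1) * Bh (2*(j+1))| ≤ |Bh (2*j+2)|
            rw [abs_mul, _root_.abs_pow, abs_neg, abs_one, one_pow, one_mul,
              show 2*(j+1) = 2*j+2 from by omega]
        _ ≤ 1/2 := Bh_tail_tsum
    have habs := abs_le.mp htail
    have hSeq : S = 1 + ∑' j, (-1:ℝ)^(j+1) * Bh (2*(j+1)) := by
      have hone : (∑ i ∈ Finset.range 1, (fun j : ℕ => (-1:ℝ)^j * Bh (2*j)) i) = 1 := by
        simp [Bh_zero]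
      rw [← hS.tsum_eq, ← h01, hone]
    rw [hSeq]
    linarith [habs.1]
  have hfinal : S = Real.sqrt ((1 + Real.sqrt 2)/2) := by
    rw [← hS2]
    exact (Real.sqrt_mul_self hSpos).symm
  show HasSum (fun j : ℕ => (-1:ℝ)^j * Bh (2*j)) _
  rw [← hfinal]
  exact hS
end

section
/- Let d(k) = C(2k, k) / 4^k (so d(k) = (1·3·5···(2k−1))/(2·4·6···(2k)) for k ≥ 1, d(0) = 1), and let φ ∈ (−π, π). Then as r → 1 from below with r ∈ (0,1), the function r ↦ ∑_{k≥0} (−1)^k · d(k) · r^k · cos(kφ) tends to cos(φ/4) / √(2·cos(φ/2)). -/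
open Complex

lemma prod_coeff (n : ℕ) :
    ∏ i ∈ Finset.range n, ((-(1/2) : ℂ) - i) =
      (-1)^n * ((2*n).factorial) / (4^n * (n.factorial)) := by
  induction n with
  | zero => simp
  | succ n ih =>
    rw [Finset.prod_range_succ, ih]
    have e1 : ((2*(n+1)).factorial : ℂ) = (2*n+2) * ((2*n+1) * ((2*n).factorial)) := by
      rw [show 2*(n+1) = (2*n+1)+1 by ring, Nat.factorial_succ, Nat.factorial_succ]
      push_cast; ring
    have e2 : (((n+1)).factorial : ℂ) = (n+1) * (n.factorial) := by
      rw [Nat.factorial_succ]; push_cast; ring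
    have hf : ((2*n).factorial : ℂ) ≠ 0 := Nat.cast_ne_zero.mpr (Nat.factorial_ne_zero _)
    have hf2 : ((n).factorial : ℂ) ≠ 0 := Nat.cast_ne_zero.mpr (Nat.factorial_ne_zero _)
    have h4 : (4:ℂ)^n ≠ 0 := pow_ne_zero _ (by norm_num)
    have hn1 : ((n:ℂ)+1) ≠ 0 := Nat.cast_add_one_ne_zero n
    rw [pow_succ, pow_succ, e1, e2]
    field_simp
    ring


lemma iter_deriv_cpow (n : ℕ) : ∀ z : ℂ, 0 < (1+z).re →
    iteratedDeriv n (fun w : ℂ => (1+w) ^ (-(1/2) : ℂ)) z =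
      (∏ i ∈ Finset.range n, ((-(1/2):ℂ) - i)) * (1+z) ^ ((-(1/2) : ℂ) - n) := by
  induction n with
  | zero => intro z hz; simp
  | succ n ih =>
    intro z hz
    rw [iteratedDeriv_succ]
    have hU : IsOpen {w : ℂ | 0 < (1+w).re} :=
      isOpen_lt continuous_const (by fun_prop)
    have hev : iteratedDeriv n (fun w : ℂ => (1+w) ^ (-(1/2):ℂ)) =ᶠ[nhds z]
        (fun w => (∏ i ∈ Finset.range n, ((-(1/2):ℂ) - i)) * (1+w) ^ ((-(1/2):ℂ) - n)) := by
      filter_upwards [hU.mem_nhds hz] with w hw using ih w hw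
    rw [hev.deriv_eq]
    have hdbase : HasDerivAt (fun w : ℂ => (1+w) ^ ((-(1/2):ℂ) - n))
        ((((-(1/2):ℂ) - n) * (1+z) ^ ((-(1/2):ℂ) - n - 1)) * 1) z :=
      HasDerivAt.cpow_const ((hasDerivAt_id z).const_add 1) (Or.inl hz)
    have hd := hdbase.const_mul (∏ i ∈ Finset.range n, ((-(1/2):ℂ) - i))
    rw [hd.deriv, Finset.prod_range_succ]
    push_cast
    rw [sub_sub]
    ring

lemma hasSum_binom {z : ℂ} (hz : ‖z‖ < 1) :
    HasSum (fun n : ℕ => ((-1:ℂ)^n * (((2*n).choose n : ℂ) / 4^n)) * z^n)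
      ((1+z) ^ (-(1/2) : ℂ)) := by
  have hre : ∀ w : ℂ, ‖w‖ < 1 → 0 < (1+w).re := by
    intro w hw
    have h1 : |w.re| ≤ ‖w‖ := Complex.abs_re_le_norm w
    have := abs_le.mp h1
    simp only [Complex.add_re, Complex.one_re]
    linarith
  have hdiff : DifferentiableOn ℂ (fun w : ℂ => (1+w) ^ (-(1/2) : ℂ)) (Metric.ball 0 1) := by
    intro w hw
    rw [Metric.mem_ball, dist_zero_right] at hw
    have h0 : (1+w) ∈ Complex.slitPlane := Or.inl (hre w (by simpa using hw))
    exact (((hasDerivAt_id w).const_add 1).cpow_const h0).differentiableAt.differentiableWithinAt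
  have H := Complex.hasSum_taylorSeries_on_ball hdiff
    (z := z) (by simpa [Metric.mem_ball, dist_zero_right] using hz)
  have hkey : ∀ n : ℕ, ((n.factorial : ℂ))⁻¹ • (z - 0)^n • iteratedDeriv n
        (fun w : ℂ => (1+w) ^ (-(1/2) : ℂ)) 0 =
      ((-1:ℂ)^n * (((2*n).choose n : ℂ) / 4^n)) * z^n := by
    intro n
    rw [iter_deriv_cpow n 0 (by norm_num), prod_coeff]
    have hch : ((2*n).choose n : ℂ) * (n.factorial) * (n.factorial) = ((2*n).factorial) := by
      have h := Nat.choose_mul_factorial_mul_factorial (show n ≤ 2*n by omega)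
      rw [show 2*n - n = n from by omega] at h
      exact_mod_cast congrArg (Nat.cast : ℕ → ℂ) h
    rw [← hch]
    have hf2 : ((n).factorial : ℂ) ≠ 0 := Nat.cast_ne_zero.mpr (Nat.factorial_ne_zero _)
    have h4 : (4:ℂ)^n ≠ 0 := pow_ne_zero _ (by norm_num)
    simp only [add_zero, Complex.one_cpow, sub_zero, smul_eq_mul, mul_one]
    field_simp
  exact funext hkey ▸ H


lemma cpow_re_eval {a θ : ℝ} (ha : 0 < a) (hθ : θ ∈ Set.Ioo (-Real.pi) Real.pi) :
    ((((a:ℂ) * Complex.exp ((θ:ℂ) * Complex.I))) ^ (-(1/2) : ℂ)).re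
      = Real.cos (θ/2) / Real.sqrt a := by
  set z : ℂ := (a:ℂ) * Complex.exp ((θ:ℂ) * Complex.I) with hzdef
  have hzform : z = (a:ℂ) * (Complex.cos θ + Complex.sin θ * Complex.I) := by
    rw [hzdef, Complex.exp_mul_I]
  have harg : z.arg = θ := by
    rw [hzform]
    exact Complex.arg_mul_cos_add_sin_mul_I ha ⟨hθ.1, hθ.2.le⟩
  have habs : ‖z‖ = a := by
    rw [hzform, norm_mul, Complex.norm_cos_add_sin_mul_I, Complex.norm_real, Real.norm_eq_abs,
      abs_of_pos ha, mul_one]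
  have hz0 : z ≠ 0 := by
    intro h; rw [h] at habs; simp at habs; exact ha.ne' habs.symm
  rw [Complex.cpow_def_of_ne_zero hz0, Complex.exp_re]
  have hre : (Complex.log z * (-(1/2) : ℂ)).re = -(Real.log a / 2) := by
    simp [Complex.mul_re, Complex.log_re, Complex.log_im, habs]
    ring
  have him : (Complex.log z * (-(1/2) : ℂ)).im = -(θ/2) := by
    simp [Complex.mul_im, Complex.log_re, Complex.log_im, harg]
    ring
  rw [hre, him, Real.cos_neg]
  have hsqrt : Real.sqrt a = Real.exp (Real.log a / 2) := by
    rw [Real.sqrt_eq_rpow, Real.rpow_def_of_pos ha]; ring_nf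
  rw [hsqrt, Real.exp_neg]
  ring

theorem abel_sum_central_binomial_cos (φ : ℝ) (hφ : φ ∈ Set.Ioo (-Real.pi) Real.pi) :
    Filter.Tendsto
      (fun r : ℝ =>
        ∑' k : ℕ, (-1 : ℝ) ^ k * (((2 * k).choose k : ℝ) / 4 ^ k) * r ^ k * Real.cos (k * φ))
      (nhdsWithin 1 (Set.Ioo 0 1))
      (nhds (Real.cos (φ / 4) / Real.sqrt (2 * Real.cos (φ / 2)))) := by
  obtain ⟨hφ1, hφ2⟩ := hφ
  have hpi := Real.pi_pos
  have hcos : 0 < Real.cos (φ/2) :=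
    Real.cos_pos_of_mem_Ioo ⟨by linarith, by linarith⟩
  set e : ℂ := Complex.exp ((φ:ℂ) * Complex.I) with he
  -- the limit function
  set g : ℝ → ℝ := fun r => ((1 + (r:ℂ) * e) ^ (-(1/2) : ℂ)).re with hg
  -- Step 1: on Ioo 0 1 the tsum equals g
  have heq : ∀ r ∈ Set.Ioo (0:ℝ) 1,
      (∑' k : ℕ, (-1 : ℝ) ^ k * (((2 * k).choose k : ℝ) / 4 ^ k) * r ^ k * Real.cos (k * φ))
        = g r := by
    intro r hr
    have habs : ‖(r:ℂ) * e‖ < 1 := by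
      rw [norm_mul, Complex.norm_real, Real.norm_eq_abs, Complex.norm_exp_ofReal_mul_I, mul_one,
        abs_of_pos hr.1]
      exact hr.2
    have H := Complex.hasSum_re (hasSum_binom habs)
    have hterm : ∀ n : ℕ, ((((-1:ℂ)^n * (((2*n).choose n : ℂ) / 4^n)) * ((r:ℂ)*e)^n).re)
        = (-1 : ℝ) ^ n * (((2 * n).choose n : ℝ) / 4 ^ n) * r ^ n * Real.cos (n * φ) := by
      intro n
      have h1 : (((-1:ℂ)^n * (((2*n).choose n : ℂ) / 4^n)) * ((r:ℂ)*e)^n)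
          = ((((-1:ℝ)^n * (((2*n).choose n : ℝ) / 4^n) * r^n : ℝ)) : ℂ)
            * Complex.exp ((((n:ℝ) * φ : ℝ) : ℂ) * Complex.I) := by
        rw [he, mul_pow, ← Complex.exp_nat_mul]
        push_cast
        ring_nf
      rw [h1, Complex.re_ofReal_mul, Complex.exp_ofReal_mul_I_re]
    have H2 : HasSum (fun n : ℕ => (-1 : ℝ) ^ n * (((2 * n).choose n : ℝ) / 4 ^ n) * r ^ n
        * Real.cos (n * φ)) (g r) := funext hterm ▸ H
    exact H2.tsum_eq
  -- Step 2: g is continuous at 1 within the set, with the right limit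
  have hval : g 1 = Real.cos (φ / 4) / Real.sqrt (2 * Real.cos (φ / 2)) := by
    have hform : (1 : ℂ) + e = ((2 * Real.cos (φ/2) : ℝ) : ℂ)
        * Complex.exp (((φ/2 : ℝ) : ℂ) * Complex.I) := by
      apply Complex.ext
      · simp only [he, Complex.add_re, Complex.one_re, Complex.exp_ofReal_mul_I_re,
          Complex.re_ofReal_mul]
        have h := Real.cos_sq (φ/2)
        rw [show 2 * (φ/2) = φ by ring] at h
        nlinarith
      · simp only [he, Complex.add_im, Complex.one_im, Complex.exp_ofReal_mul_I_im,
          Complex.im_ofReal_mul, zero_add]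
        have h := Real.sin_two_mul (φ/2)
        rw [show 2 * (φ/2) = φ by ring] at h
        rw [h]; ring
    rw [hg]
    simp only [Complex.ofReal_one, one_mul]
    rw [hform, cpow_re_eval (by positivity) ⟨by linarith, by linarith⟩,
      show φ/2/2 = φ/4 by ring]
  have hslit : (1 : ℂ) + (1:ℝ) * e ∈ Complex.slitPlane := by
    apply Or.inl
    simp only [he, Complex.add_re, Complex.one_re, Complex.ofReal_one, one_mul,
      Complex.exp_ofReal_mul_I_re]
    have h2 : Real.cos φ = 2 * Real.cos (φ/2)^2 - 1 := by
      rw [show φ = 2 * (φ/2) by ring, Real.cos_two_mul]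
      ring_nf
    nlinarith
  have hcont : ContinuousAt g 1 := by
    have h1 : ContinuousAt (fun r : ℝ => 1 + (r:ℂ) * e) 1 := by fun_prop
    have h2 : ContinuousAt (fun z : ℂ => z ^ (-(1/2) : ℂ)) (1 + ((1:ℝ):ℂ) * e) :=
      continuousAt_cpow_const hslit
    have h3 : ContinuousAt (fun r : ℝ => (1 + (r:ℂ) * e) ^ (-(1/2) : ℂ)) 1 := Filter.Tendsto.comp h2 h1
    rw [hg]
    exact Filter.Tendsto.comp Complex.continuous_re.continuousAt h3
  have := hcont.continuousWithinAt (s := Set.Ioo (0:ℝ) 1)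
  rw [ContinuousWithinAt] at this
  rw [hval] at this
  exact this.congr' (by filter_upwards [self_mem_nhdsWithin] with r hr using (heq r hr).symm)
end

section
/- Let d(k) = C(2k, k) / 4^k. Then the partial sums ∑_{k=0}^{N−1} (−1)^k · d(k) converge, as N → ∞, to 1/√2; i.e. 1 − 1/2 + (1·3)/(2·4) − (1·3·5)/(2·4·6) + (1·3·5·7)/(2·4·6·8) − ⋯ = 1/√2. -/
open Finset Nat Filter Real

private lemma two_mul_T (n : ℕ) :
    2 * (∑ k ∈ range (n+1), k * (centralBinom k * centralBinom (n-k))) =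
      n * ∑ k ∈ range (n+1), centralBinom k * centralBinom (n-k) := by
  have h := Finset.sum_range_reflect (fun k => k * (centralBinom k * centralBinom (n-k))) (n+1)
  rw [two_mul]
  nth_rewrite 1 [← h]
  rw [← Finset.sum_add_distrib, Finset.mul_sum]
  refine Finset.sum_congr rfl fun j hj => ?_
  rw [Finset.mem_range] at hj
  have h1 : n + 1 - 1 - j = n - j := by omega
  have h2 : n - (n - j) = j := by omega
  obtain ⟨a, ha⟩ : ∃ a, n - j = a := ⟨_, rfl⟩
  have h3 : n = j + a := by omega
  rw [h1, h2, ha, h3]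
  ring

private lemma conv_centralBinom (n : ℕ) :
    ∑ k ∈ range (n+1), centralBinom k * centralBinom (n-k) = 4 ^ n := by
  induction n with
  | zero => simp [centralBinom]
  | succ n ih =>
    have hT : (∑ k ∈ range (n+1+1), k * (centralBinom k * centralBinom (n+1-k))) =
        4 * (∑ k ∈ range (n+1), k * (centralBinom k * centralBinom (n-k)))
          + 2 * ∑ k ∈ range (n+1), centralBinom k * centralBinom (n-k) := by
      rw [Finset.sum_range_succ']
      simp only [zero_mul, add_zero]
      rw [Finset.mul_sum, Finset.mul_sum, ← Finset.sum_add_distrib]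
      refine Finset.sum_congr rfl fun k hk => ?_
      have h1 : n + 1 - (k + 1) = n - k := by omega
      rw [h1, ← mul_assoc, succ_mul_centralBinom_succ]
      ring
    have h1 := two_mul_T (n+1)
    have h2 := two_mul_T n
    rw [hT, ih] at h1
    rw [ih] at h2
    have key : (n+1) * (∑ k ∈ range (n+1+1), centralBinom k * centralBinom (n+1-k)) =
        (n+1) * (4 * 4 ^ n) := by
      rw [← h1]
      calc 2 * (4 * (∑ k ∈ range (n+1), k * (centralBinom k * centralBinom (n-k))) + 2 * 4 ^ n)
          = 4 * (2 * (∑ k ∈ range (n+1), k * (centralBinom k * centralBinom (n-k)))) + 4 * 4 ^ n := by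
            ring
        _ = 4 * (n * 4 ^ n) + 4 * 4 ^ n := by rw [h2]
        _ = (n+1) * (4 * 4 ^ n) := by ring
    have := Nat.eq_of_mul_eq_mul_left (Nat.succ_pos n) key
    rw [this]; ring

noncomputable def dcb (k : ℕ) : ℝ := (Nat.centralBinom k : ℝ) / 4 ^ k

private lemma dcb_nonneg (k : ℕ) : 0 ≤ dcb k := by
  unfold dcb; positivity

private lemma dcb_zero : dcb 0 = 1 := by simp [dcb, Nat.centralBinom]

private lemma dcb_succ (k : ℕ) : (2 * (k:ℝ) + 2) * dcb (k+1) = (2 * k + 1) * dcb k := by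
  have h := Nat.succ_mul_centralBinom_succ k
  have hc : ((k:ℝ) + 1) * (Nat.centralBinom (k+1) : ℝ) = 2 * (2 * k + 1) * Nat.centralBinom k := by
    exact_mod_cast congrArg (fun m : ℕ => (m : ℝ)) h
  unfold dcb
  have h4 : (4:ℝ) ^ k ≠ 0 := by positivity
  field_simp [pow_succ]
  linear_combination 2 * (4:ℝ)^k * hc

private lemma dcb_antitone : Antitone dcb := by
  refine antitone_nat_of_succ_le fun k => ?_
  have h := dcb_succ k
  nlinarith [dcb_nonneg k, dcb_nonneg (k+1)]

private lemma dcb_le_one (k : ℕ) : dcb k ≤ 1 := by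
  simpa [dcb_zero] using dcb_antitone (Nat.zero_le k)

private lemma dcb_sq_le (k : ℕ) : (2 * (k:ℝ) + 1) * dcb k ^ 2 ≤ 1 := by
  induction k with
  | zero => simp [dcb_zero]
  | succ k ih =>
    have h := dcb_succ k
    have hsq : (2 * (k:ℝ) + 2) ^ 2 * dcb (k+1) ^ 2 = (2 * k + 1) ^ 2 * dcb k ^ 2 := by
      linear_combination ((2*(k:ℝ)+2) * dcb (k+1) + (2*(k:ℝ)+1) * dcb k) * h
    have hk : (0:ℝ) ≤ (k:ℝ) := Nat.cast_nonneg k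
    have hpos : (0:ℝ) < (2 * (k:ℝ) + 2) ^ 2 := by nlinarith
    have e1 : (2*(k:ℝ)+3) * ((2*k+2)^2 * dcb (k+1)^2)
        = (2*k+3)*(2*k+1) * ((2*k+1)*dcb k^2) := by linear_combination (2*(k:ℝ)+3) * hsq
    have hnn : (0:ℝ) ≤ (2*(k:ℝ)+3)*(2*k+1) := by positivity
    have e2 : (2*(k:ℝ)+3)*(2*k+1) * ((2*(k:ℝ)+1)*dcb k^2) ≤ (2*(k:ℝ)+3)*(2*k+1) :=
      mul_le_of_le_one_right hnn ih
    have e3 : (2*(k:ℝ)+3)*(2*(k:ℝ)+1) ≤ (2*k+2)^2 := by nlinarith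
    have e4 : (2*(k:ℝ)+2)^2 * ((2*(k:ℝ)+3) * dcb (k+1)^2) ≤ (2*(k:ℝ)+2)^2 * 1 := by
      nlinarith [e1, e2, e3]
    have e5 := le_of_mul_le_mul_left e4 hpos
    push_cast
    nlinarith [e5]

private lemma dcb_tendsto_zero : Tendsto dcb atTop (nhds 0) := by
  have hle : ∀ k : ℕ, dcb k ≤ Real.sqrt (1 / (k + 1)) := by
    intro k
    have h1 : dcb k ^ 2 ≤ 1 / ((k:ℝ) + 1) := by
      have h := dcb_sq_le k
      have hk : (0:ℝ) ≤ (k:ℝ) := Nat.cast_nonneg k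
      have hp : (0:ℝ) < (k:ℝ) + 1 := by linarith
      rw [le_div_iff₀ hp]
      nlinarith [sq_nonneg (dcb k)]
    calc dcb k = Real.sqrt (dcb k ^ 2) := by rw [Real.sqrt_sq (dcb_nonneg k)]
      _ ≤ Real.sqrt (1 / (k + 1)) := Real.sqrt_le_sqrt h1
  have h0 : Tendsto (fun k : ℕ => Real.sqrt (1 / (k + 1))) atTop (nhds 0) := by
    have := (Real.continuous_sqrt.tendsto 0).comp tendsto_one_div_add_atTop_nhds_zero_nat
    simpa [Function.comp_def] using this
  exact squeeze_zero dcb_nonneg hle h0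

private lemma dcb_conv (n : ℕ) :
    ∑ k ∈ range (n+1), dcb k * dcb (n-k) = 1 := by
  have h : ((∑ k ∈ range (n+1), Nat.centralBinom k * Nat.centralBinom (n-k) : ℕ) : ℝ)
      = (4:ℝ) ^ n := by exact_mod_cast congrArg (fun m : ℕ => (m : ℝ)) (conv_centralBinom n)
  push_cast at h
  have h4 : (4:ℝ) ^ n ≠ 0 := by positivity
  have step : ∀ k ∈ range (n+1), dcb k * dcb (n-k)
      = ((Nat.centralBinom k : ℝ) * (Nat.centralBinom (n-k) : ℝ)) / 4 ^ n := by
    intro k hk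
    rw [Finset.mem_range] at hk
    unfold dcb
    rw [_root_.div_mul_div_comm, ← pow_add, show k + (n - k) = n by omega]
  rw [Finset.sum_congr rfl step, ← Finset.sum_div, h, div_self h4]

private lemma tsum_eq (x : ℝ) (hx : x ∈ Set.Ioo (0:ℝ) 1) :
    ∑' n, ((-1:ℝ) ^ n * dcb n) * x ^ n = 1 / Real.sqrt (1 + x) := by
  obtain ⟨hx0, hx1⟩ := hx
  set F : ℕ → ℝ := fun n => ((-1:ℝ) ^ n * dcb n) * x ^ n with hF
  have hnorm : Summable fun n => ‖F n‖ := by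
    refine Summable.of_nonneg_of_le (fun n => norm_nonneg _) (fun n => ?_)
      (summable_geometric_of_lt_one hx0.le hx1)
    have : ‖F n‖ = dcb n * x ^ n := by
      rw [hF]
      rw [Real.norm_eq_abs, abs_mul, abs_mul, abs_pow, abs_pow, abs_neg, abs_one, one_pow,
        one_mul, abs_of_nonneg (dcb_nonneg n), abs_of_nonneg hx0.le]
    rw [this]
    calc dcb n * x ^ n ≤ 1 * x ^ n := by
          apply mul_le_mul_of_nonneg_right (dcb_le_one n) (by positivity)
      _ = x ^ n := one_mul _
  have hsum : Summable F := hnorm.of_norm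
  set S : ℝ := ∑' n, F n with hS
  have hsq : S * S = 1 / (1 + x) := by
    rw [hS, tsum_mul_tsum_eq_tsum_sum_range_of_summable_norm hnorm hnorm]
    have hterm : ∀ n : ℕ, ∑ k ∈ range (n+1), F k * F (n-k) = (-x) ^ n := by
      intro n
      have : ∀ k ∈ range (n+1), F k * F (n-k) = ((-x) ^ n) * (dcb k * dcb (n-k)) := by
        intro k hk
        rw [Finset.mem_range] at hk
        obtain ⟨j, hj⟩ : ∃ j, n - k = j := ⟨_, rfl⟩
        have hn : n = k + j := by omega
        rw [hF]
        simp only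
        rw [hj, hn, neg_pow x (k+j), pow_add, pow_add]
        ring
      rw [Finset.sum_congr rfl this, ← Finset.mul_sum, dcb_conv, mul_one]
    rw [tsum_congr hterm, tsum_geometric_of_norm_lt_one (by
      rw [norm_neg, Real.norm_eq_abs, abs_of_nonneg hx0.le]; exact hx1)]
    rw [one_div, sub_neg_eq_add]
  have hpos : 0 < S := by
    have htend : Tendsto (fun n => ∑ i ∈ range n, (-1:ℝ) ^ i * (dcb i * x ^ i)) atTop (nhds S) := by
      have := hsum.hasSum.tendsto_sum_nat
      refine this.congr fun n => Finset.sum_congr rfl fun i _ => ?_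
      rw [hF]; ring
    have hanti : Antitone fun n : ℕ => dcb n * x ^ n := by
      intro m n hmn
      exact mul_le_mul (dcb_antitone hmn) (pow_le_pow_of_le_one hx0.le hx1.le hmn)
        (by positivity) (dcb_nonneg m)
    have hlb := hanti.alternating_series_le_tendsto htend 1
    have : ∑ i ∈ range (2*1), (-1:ℝ) ^ i * (dcb i * x ^ i) = 1 - dcb 1 * x := by
      norm_num [Finset.sum_range_succ, dcb_zero, sub_eq_add_neg]
    rw [this] at hlb
    have hd1 : dcb 1 = 1/2 := by norm_num [dcb, Nat.centralBinom]
    rw [hd1] at hlb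
    linarith
  have h1x : (0:ℝ) < 1 + x := by linarith
  have : S = Real.sqrt (S * S) := (Real.sqrt_mul_self hpos.le).symm
  rw [this, hsq, one_div, Real.sqrt_inv, one_div]

theorem alternating_central_binomial_sum :
    Filter.Tendsto
      (fun N : ℕ => ∑ k ∈ Finset.range N, (-1 : ℝ) ^ k * (((2 * k).choose k : ℝ) / 4 ^ k))
      Filter.atTop (nhds (1 / Real.sqrt 2)) := by
  have hshape : ∀ k : ℕ, (-1 : ℝ) ^ k * (((2 * k).choose k : ℝ) / 4 ^ k) = (-1:ℝ) ^ k * dcb k := by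
    intro k
    rw [dcb, Nat.centralBinom_eq_two_mul_choose]
  obtain ⟨l, hl⟩ := dcb_antitone.tendsto_alternating_series_of_tendsto_zero dcb_tendsto_zero
  have habel := Real.tendsto_tsum_powerSeries_nhdsWithin_lt hl
  have hcongr : Tendsto (fun x : ℝ => 1 / Real.sqrt (1 + x)) (nhdsWithin 1 (Set.Iio 1)) (nhds l) := by
    refine habel.congr' ?_
    filter_upwards [Ioo_mem_nhdsLT_of_mem (by norm_num : (1:ℝ) ∈ Set.Ioc 0 1)] with x hx
    exact tsum_eq x hx
  have hcont : Tendsto (fun x : ℝ => 1 / Real.sqrt (1 + x)) (nhdsWithin 1 (Set.Iio 1))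
      (nhds (1 / Real.sqrt 2)) := by
    have hc : ContinuousAt (fun x : ℝ => 1 / Real.sqrt (1 + x)) 1 := by
      have h2 : Real.sqrt (1 + 1) ≠ 0 := by
        rw [show (1:ℝ) + 1 = 2 by norm_num]
        positivity
      exact (continuousAt_const.div ((Real.continuous_sqrt.comp
        (continuous_const.add continuous_id)).continuousAt) h2)
    have := hc.continuousWithinAt (s := Set.Iio 1) |>.tendsto
    simpa [show (1:ℝ) + 1 = 2 by norm_num] using this
  have hlval : l = 1 / Real.sqrt 2 := tendsto_nhds_unique hcongr hcont
  rw [← hlval]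
  exact hl.congr fun n => Finset.sum_congr rfl fun k _ => (hshape k).symm
end

section
/- Let d(k) = C(2k, k) / 4^k. Then the partial sums ∑_{j=0}^{N−1} (−1)^j · d(2j) converge, as N → ∞, to (1/2)·√(1 + √2); i.e. 1 − (1·3)/(2·4) + (1·3·5·7)/(2·4·6·8) − (1·3·5·7·9·11)/(2·4·6·8·10·12) + ⋯ = (1/2)·√(1+√2). -/
open Finset Filter Real Topology

noncomputable def dd (n : ℕ) : ℝ := ((2 * n).choose n : ℝ) / 4 ^ n

lemma dd_zero : dd 0 = 1 := by simp [dd]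

lemma dd_pos (n : ℕ) : 0 < dd n := by
  apply div_pos
  · exact_mod_cast Nat.choose_pos (by omega)
  · positivity

lemma dd_rec (n : ℕ) : (2 * (n : ℝ) + 2) * dd (n + 1) = (2 * n + 1) * dd n := by
  have h := Nat.succ_mul_centralBinom_succ n
  rw [Nat.centralBinom, Nat.centralBinom] at h
  have hc : ((n : ℝ) + 1) * ((2 * (n + 1)).choose (n + 1) : ℝ) =
      2 * (2 * n + 1) * ((2 * n).choose n : ℝ) := by exact_mod_cast h
  have h4 : (4 : ℝ) ^ (n + 1) = 4 * 4 ^ n := by ring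
  unfold dd
  rw [h4]
  have h4n : (4 : ℝ) ^ n ≠ 0 := by positivity
  rw [mul_div_assoc', mul_div_assoc', div_eq_div_iff (by positivity) h4n]
  linear_combination 2 * (4:ℝ) ^ n * hc

lemma dd_succ_le (n : ℕ) : dd (n + 1) ≤ dd n := by
  have h := dd_rec n
  nlinarith [dd_pos n, dd_pos (n + 1), Nat.cast_nonneg (α := ℝ) n]

lemma dd_antitone : Antitone dd := antitone_nat_of_succ_le dd_succ_le

lemma dd_le_one (n : ℕ) : dd n ≤ 1 := by
  have := dd_antitone (Nat.zero_le n)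
  rwa [dd_zero] at this

lemma dd_sq (n : ℕ) : dd n ^ 2 * (2 * n + 1) ≤ 1 := by
  induction n with
  | zero => simp [dd_zero]
  | succ n ih =>
    have h := dd_rec n
    have hp := dd_pos n
    have hp1 := dd_pos (n + 1)
    have hn : (0:ℝ) ≤ (n:ℝ) := Nat.cast_nonneg n
    have key : dd (n+1) ^ 2 * (2 * (n+1) + 1) ≤ dd n ^ 2 * (2 * n + 1) := by
      have h2 : dd (n+1) = (2 * (n:ℝ) + 1) * dd n / (2 * n + 2) := by
        field_simp at h ⊢; linarith [h]
      rw [h2]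
      rw [div_pow, div_mul_eq_mul_div, div_le_iff₀ (by positivity)]
      push_cast
      nlinarith [sq_nonneg (dd n), hn]
    push_cast at key ⊢
    linarith

lemma dd_tendsto : Tendsto dd atTop (𝓝 0) := by
  have hb : ∀ n : ℕ, dd n ≤ Real.sqrt (1 / (n + 1)) := by
    intro n
    have h1 : dd n ^ 2 ≤ 1 / ((n : ℝ) + 1) := by
      have h := dd_sq n
      have hn : (0:ℝ) < (n:ℝ) + 1 := by positivity
      rw [le_div_iff₀ hn]
      nlinarith [sq_nonneg (dd n)]
    calc dd n = Real.sqrt (dd n ^ 2) := by rw [Real.sqrt_sq (dd_pos n).le]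
      _ ≤ Real.sqrt (1 / (n + 1)) := Real.sqrt_le_sqrt h1
  have hlim : Tendsto (fun n : ℕ => Real.sqrt (1 / (n + 1))) atTop (𝓝 0) := by
    have : Tendsto (fun n : ℕ => 1 / ((n : ℝ) + 1)) atTop (𝓝 0) :=
      tendsto_one_div_add_atTop_nhds_zero_nat
    have h2 := (Real.continuous_sqrt.tendsto 0).comp this
    rw [Real.sqrt_zero] at h2
    exact h2
  exact squeeze_zero (fun n => (dd_pos n).le) hb hlim

lemma conv_sum : ∀ n : ℕ, ∑ k ∈ range (n + 1), dd k * dd (n - k) = 1 := by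
  -- T n = sum of k * dd k * dd (n-k)
  have sym : ∀ (n : ℕ) (f : ℕ → ℝ), ∑ k ∈ range (n + 1), f k = ∑ k ∈ range (n + 1), f (n - k) := by
    intro n f
    rw [← Finset.sum_range_reflect]
    apply Finset.sum_congr rfl
    intro k hk
    have h : n + 1 - 1 - k = n - k := by omega
    rw [h]
  have twoT : ∀ n : ℕ, 2 * (∑ k ∈ range (n + 1), (k : ℝ) * (dd k * dd (n - k)))
      = n * ∑ k ∈ range (n + 1), dd k * dd (n - k) := by
    intro n
    have h2 : ∑ k ∈ range (n + 1), (k : ℝ) * (dd k * dd (n - k))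
        = ∑ k ∈ range (n + 1), ((n - k : ℕ) : ℝ) * (dd (n - k) * dd k) := by
      rw [sym n (fun k => (k : ℝ) * (dd k * dd (n - k)))]
      apply Finset.sum_congr rfl
      intro k hk
      rw [Finset.mem_range] at hk
      rw [Nat.sub_sub_self (by omega)]
    rw [two_mul]
    nth_rewrite 2 [h2]
    rw [Finset.mul_sum, ← Finset.sum_add_distrib]
    apply Finset.sum_congr rfl
    intro k hk
    rw [Finset.mem_range] at hk
    have : ((n - k : ℕ) : ℝ) = (n : ℝ) - k := by
      rw [Nat.cast_sub (by omega)]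
    rw [this]; ring
  intro n
  induction n with
  | zero => simp [dd_zero]
  | succ n ih =>
    have key : ((n:ℝ) + 1) * ∑ k ∈ range (n + 2), dd k * dd (n + 1 - k)
        = ((n:ℝ) + 1) * ∑ k ∈ range (n + 1), dd k * dd (n - k) := by
      have e1 : ((n:ℝ) + 1) * ∑ k ∈ range (n + 2), dd k * dd (n + 1 - k)
          = 2 * (∑ k ∈ range (n + 2), (k : ℝ) * (dd k * dd (n + 1 - k))) := by
        rw [twoT (n + 1)]; push_cast; ring
      have e2 : ∑ k ∈ range (n + 2), (k : ℝ) * (dd k * dd (n + 1 - k))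
          = ∑ j ∈ range (n + 1), ((j : ℝ) + 1) * (dd (j + 1) * dd (n - j)) := by
        rw [Finset.sum_range_succ' (fun k => (k : ℝ) * (dd k * dd (n + 1 - k))) (n + 1)]
        simp only [Nat.cast_zero, zero_mul, add_zero]
        apply Finset.sum_congr rfl
        intro j hj
        rw [Finset.mem_range] at hj
        have : n + 1 - (j + 1) = n - j := by omega
        rw [this]; push_cast; ring
      have e3 : ∀ j : ℕ, 2 * (((j : ℝ) + 1) * (dd (j + 1) * dd (n - j)))
          = (2 * j + 1) * (dd j * dd (n - j)) := by
        intro j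
        have h := dd_rec j
        linear_combination dd (n - j) * h
      rw [e1, e2, Finset.mul_sum]
      rw [Finset.sum_congr rfl (fun j _ => e3 j)]
      have e4 : ∑ j ∈ range (n + 1), (2 * (j:ℝ) + 1) * (dd j * dd (n - j))
          = 2 * (∑ j ∈ range (n + 1), (j : ℝ) * (dd j * dd (n - j)))
            + ∑ j ∈ range (n + 1), dd j * dd (n - j) := by
        rw [Finset.mul_sum, ← Finset.sum_add_distrib]
        apply Finset.sum_congr rfl
        intro j hj; ring
      rw [e4, twoT n]; ring
    have hne : ((n:ℝ) + 1) ≠ 0 := by positivity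
    have := mul_left_cancel₀ hne key
    rw [this, ih]




lemma key_eval {x : ℝ} (hx0 : 0 < x) (hx1 : x < 1) :
    ∑' n : ℕ, ((-1:ℝ)^n * dd (2*n)) * x ^ n
      = Real.sqrt ((1 + Real.sqrt (1+x)) / (2*(1+x))) := by
  set t : ℝ := Real.sqrt x with ht_def
  have ht0 : 0 < t := Real.sqrt_pos.2 hx0
  have ht2 : t ^ 2 = x := Real.sq_sqrt hx0.le
  have ht1 : t < 1 := by nlinarith
  set z : ℂ := (t : ℂ) * Complex.I with hz_def
  have hznorm : ‖z‖ = t := by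
    rw [hz_def, norm_mul, Complex.norm_real, Complex.norm_I, mul_one,
      Real.norm_eq_abs, abs_of_pos ht0]
  have hz1 : ‖z‖ < 1 := by rwa [hznorm]
  have hz2 : z ^ 2 = -((t:ℂ)^2) := by
    rw [hz_def, mul_pow, Complex.I_sq]; ring
  -- summability
  have hterm_norm : ∀ n : ℕ, ‖(dd n : ℂ) * z ^ n‖ = dd n * t ^ n := by
    intro n
    rw [norm_mul, norm_pow, hznorm, Complex.norm_real, Real.norm_eq_abs,
      abs_of_pos (dd_pos n)]
  have hsn : Summable (fun n => ‖(dd n : ℂ) * z ^ n‖) := by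
    apply Summable.of_nonneg_of_le (fun n => norm_nonneg _) (fun n => ?_)
      (summable_geometric_of_lt_one ht0.le ht1)
    rw [hterm_norm n]
    calc dd n * t ^ n ≤ 1 * t ^ n :=
          mul_le_mul_of_nonneg_right (dd_le_one n) (by positivity)
      _ = t ^ n := one_mul _
  -- Cauchy product
  have hmul : (∑' n : ℕ, (dd n : ℂ) * z ^ n) * (∑' n : ℕ, (dd n : ℂ) * z ^ n)
      = ∑' n : ℕ, ∑ k ∈ range (n+1), ((dd k : ℂ) * z ^ k) * ((dd (n-k) : ℂ) * z ^ (n-k)) :=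
    tsum_mul_tsum_eq_tsum_sum_range_of_summable_norm hsn hsn
  have hinner : ∀ n : ℕ, ∑ k ∈ range (n+1), ((dd k : ℂ) * z ^ k) * ((dd (n-k) : ℂ) * z ^ (n-k))
      = z ^ n := by
    intro n
    have h1 : ∀ k ∈ range (n+1), ((dd k : ℂ) * z ^ k) * ((dd (n-k) : ℂ) * z ^ (n-k))
        = ((dd k * dd (n-k) : ℝ) : ℂ) * z ^ n := by
      intro k hk
      rw [Finset.mem_range] at hk
      have hzz : z ^ k * z ^ (n - k) = z ^ n := by
        rw [← pow_add]
        congr 1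
        omega
      push_cast
      rw [← hzz]
      ring
    rw [Finset.sum_congr rfl h1, ← Finset.sum_mul, ← Complex.ofReal_sum, conv_sum n]
    simp
  have hgeom : ∑' n : ℕ, z ^ n = (1 - z)⁻¹ := tsum_geometric_of_norm_lt_one hz1
  have hprod : (∑' n : ℕ, (dd n : ℂ) * z ^ n) * (∑' n : ℕ, (dd n : ℂ) * z ^ n) = (1 - z)⁻¹ := by
    rw [hmul, tsum_congr hinner, hgeom]
  -- even and odd parts
  set u : ℝ := ∑' n : ℕ, ((-1:ℝ)^n * dd (2*n)) * x ^ n with hu_def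
  set v : ℝ := ∑' n : ℕ, ((-1:ℝ)^n * dd (2*n+1)) * t ^ (2*n+1) with hv_def
  have habs : ∀ (c : ℝ) (n : ℕ), 0 < c → |((-1:ℝ))^n * c| = c := by
    intro c n hc
    rw [abs_mul, _root_.abs_pow, abs_neg, abs_one, one_pow, one_mul, abs_of_pos hc]
  have hsu : Summable (fun n : ℕ => ((-1:ℝ)^n * dd (2*n)) * x ^ n) := by
    apply Summable.of_norm
    apply Summable.of_nonneg_of_le (fun n => norm_nonneg _) (fun n => ?_)
      (summable_geometric_of_lt_one hx0.le hx1)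
    rw [Real.norm_eq_abs, abs_mul, habs _ _ (dd_pos _), abs_of_pos (pow_pos hx0 n)]
    calc dd (2*n) * x ^ n ≤ 1 * x ^ n :=
          mul_le_mul_of_nonneg_right (dd_le_one _) (by positivity)
      _ = x ^ n := one_mul _
  have hsv : Summable (fun n : ℕ => ((-1:ℝ)^n * dd (2*n+1)) * t ^ (2*n+1)) := by
    apply Summable.of_norm
    apply Summable.of_nonneg_of_le (fun n => norm_nonneg _) (fun n => ?_)
      ((summable_geometric_of_lt_one hx0.le hx1).mul_left t)
    rw [Real.norm_eq_abs, abs_mul, habs _ _ (dd_pos _), abs_of_pos (pow_pos ht0 _)]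
    have hts : t ^ (2*n+1) = t * x ^ n := by
      rw [pow_succ', pow_mul, ht2]
    rw [hts]
    calc dd (2*n+1) * (t * x ^ n) ≤ 1 * (t * x ^ n) :=
          mul_le_mul_of_nonneg_right (dd_le_one _) (by positivity)
      _ = t * x ^ n := one_mul _
  have hu : HasSum (fun n : ℕ => ((-1:ℝ)^n * dd (2*n)) * x ^ n) u := hsu.hasSum
  have hv : HasSum (fun n : ℕ => ((-1:ℝ)^n * dd (2*n+1)) * t ^ (2*n+1)) v := hsv.hasSum
  have hue : HasSum (fun n : ℕ => (dd (2*n) : ℂ) * z ^ (2*n)) (u : ℂ) := by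
    have h := Complex.hasSum_ofReal.2 hu
    have hfe : (fun n : ℕ => (dd (2*n) : ℂ) * z ^ (2*n))
        = fun n : ℕ => ((((-1:ℝ))^n * dd (2*n) * x ^ n : ℝ) : ℂ) := by
      funext n
      rw [pow_mul, hz2, ← ht2]
      push_cast
      ring
    rw [hfe]
    convert h using 2
  have hve : HasSum (fun n : ℕ => (dd (2*n+1) : ℂ) * z ^ (2*n+1)) ((v : ℂ) * Complex.I) := by
    have h := (Complex.hasSum_ofReal.2 hv).mul_right Complex.I
    have hfe : (fun n : ℕ => (dd (2*n+1) : ℂ) * z ^ (2*n+1))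
        = fun n : ℕ => ((((-1:ℝ))^n * dd (2*n+1) * t ^ (2*n+1) : ℝ) : ℂ) * Complex.I := by
      funext n
      rw [pow_succ, pow_mul, hz2, hz_def]
      push_cast
      ring
    rw [hfe]
    convert h using 2
  have heo : HasSum (fun n : ℕ => (dd n : ℂ) * z ^ n) ((u : ℂ) + (v : ℂ) * Complex.I) :=
    HasSum.even_add_odd hue hve
  have hprod2 : ((u : ℂ) + (v : ℂ) * Complex.I) * ((u : ℂ) + (v : ℂ) * Complex.I)
      = (1 - z)⁻¹ := by
    rw [← heo.tsum_eq]
    exact hprod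
  have hzne : (1 : ℂ) - z ≠ 0 := by
    intro h
    have : z = 1 := by linear_combination -h
    rw [this] at hz1
    norm_num at hz1
  have h3 : ((u : ℂ) + (v : ℂ) * Complex.I) * ((u : ℂ) + (v : ℂ) * Complex.I) * (1 - z) = 1 := by
    rw [hprod2, inv_mul_cancel₀ hzne]
  have hre := congrArg Complex.re h3
  have him := congrArg Complex.im h3
  rw [hz_def] at hre him
  simp only [Complex.mul_re, Complex.mul_im, Complex.add_re, Complex.add_im, Complex.sub_re,
    Complex.sub_im, Complex.one_re, Complex.one_im, Complex.ofReal_re, Complex.ofReal_im,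
    Complex.I_re, Complex.I_im, mul_zero, mul_one, zero_mul, sub_zero, zero_sub, add_zero,
    zero_add, neg_zero, neg_neg] at hre him
  have hP : (u^2 - v^2) * (1 + t^2) = 1 := by nlinarith [hre, him]
  have hQ : (2*u*v) * (1 + t^2) = t := by nlinarith [hre, him]
  have hw : (u^2 + v^2) * (1 + t^2) = Real.sqrt (1 + t^2) := by
    have hsq : ((u^2 + v^2) * (1 + t^2))^2 = 1 + t^2 := by nlinarith [hP, hQ]
    have hnn : 0 ≤ (u^2 + v^2) * (1 + t^2) := by positivity
    rw [← Real.sqrt_sq hnn, hsq]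
  have hu2 : u^2 = (1 + Real.sqrt (1+x)) / (2*(1+x)) := by
    rw [← ht2]
    have h1t : (0:ℝ) < 1 + t^2 := by positivity
    rw [eq_div_iff (by positivity)]
    nlinarith [hP, hw]
  -- nonnegativity of u
  have hanti : Antitone (fun n : ℕ => dd (2*n) * x^n) := by
    apply antitone_nat_of_succ_le
    intro n
    have h1 : dd (2*(n+1)) ≤ dd (2*n) := dd_antitone (by omega)
    have h2 : x^(n+1) ≤ x^n := pow_le_pow_of_le_one hx0.le hx1.le (by omega)
    exact mul_le_mul h1 h2 (by positivity) (dd_pos _).le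
  have htends : Tendsto (fun N => ∑ i ∈ range N, (-1:ℝ)^i * (dd (2*i) * x^i)) atTop (𝓝 u) := by
    have h := hu.tendsto_sum_nat
    convert h using 3 with N n
    ring
  have hunn : (0:ℝ) ≤ u := by
    have h := hanti.alternating_series_le_tendsto htends 0
    simpa using h
  calc u = Real.sqrt (u^2) := (Real.sqrt_sq hunn).symm
    _ = _ := by rw [hu2]
theorem alternating_central_binomial_even_sum :
    Filter.Tendsto
      (fun N : ℕ => ∑ j ∈ Finset.range N, (-1 : ℝ) ^ j * (((2 * (2 * j)).choose (2 * j) : ℝ) / 4 ^ (2 * j)))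
      Filter.atTop (nhds ((1 / 2) * Real.sqrt (1 + Real.sqrt 2))) := by
  have hfun : (fun N : ℕ => ∑ j ∈ Finset.range N,
      (-1 : ℝ) ^ j * (((2 * (2 * j)).choose (2 * j) : ℝ) / 4 ^ (2 * j)))
      = fun N : ℕ => ∑ j ∈ Finset.range N, (-1 : ℝ) ^ j * dd (2 * j) := by
    funext N
    exact Finset.sum_congr rfl (fun j _ => by rw [dd])
  rw [hfun]
  -- alternating series test gives a limit l
  have h_anti : Antitone (fun j : ℕ => dd (2 * j)) := fun a b h => dd_antitone (by omega)
  have h_two : Tendsto (fun j : ℕ => 2 * j) atTop atTop :=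
    tendsto_atTop_mono (fun j => Nat.le_mul_of_pos_left j (by norm_num)) tendsto_id
  have h_t0 : Tendsto (fun j : ℕ => dd (2 * j)) atTop (𝓝 0) := dd_tendsto.comp h_two
  obtain ⟨l, hl⟩ := h_anti.tendsto_alternating_series_of_tendsto_zero h_t0
  -- Abel's limit theorem
  have habel : Tendsto (fun x : ℝ => ∑' n : ℕ, ((-1:ℝ)^n * dd (2*n)) * x ^ n)
      (𝓝[<] 1) (𝓝 l) := Real.tendsto_tsum_powerSeries_nhdsWithin_lt hl
  -- the closed-form function
  set K : ℝ → ℝ := fun x => Real.sqrt ((1 + Real.sqrt (1+x)) / (2*(1+x))) with hK_def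
  have hKcont : ContinuousAt K 1 := by
    apply ContinuousAt.sqrt
    apply ContinuousAt.div
    · exact continuousAt_const.add ((continuousAt_const.add continuousAt_id).sqrt)
    · exact continuousAt_const.mul (continuousAt_const.add continuousAt_id)
    · norm_num
  have hKt : Tendsto K (𝓝[<] 1) (𝓝 (K 1)) := hKcont.tendsto.mono_left nhdsWithin_le_nhds
  have heq : (fun x : ℝ => ∑' n : ℕ, ((-1:ℝ)^n * dd (2*n)) * x ^ n) =ᶠ[𝓝[<] (1:ℝ)] K := by
    filter_upwards [Ioo_mem_nhdsLT_of_mem (show (1:ℝ) ∈ Set.Ioc 0 1 by norm_num)] with x hx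
    exact key_eval hx.1 hx.2
  have hl_eq : l = K 1 := tendsto_nhds_unique (habel.congr' heq) hKt
  have hK1 : K 1 = (1 / 2) * Real.sqrt (1 + Real.sqrt 2) := by
    have harg : (1 + Real.sqrt (1+1)) / (2*(1+1)) = ((1/2) * Real.sqrt (1 + Real.sqrt 2))^2 := by
      have h2 : Real.sqrt (1 + Real.sqrt 2) ^ 2 = 1 + Real.sqrt 2 :=
        Real.sq_sqrt (by positivity)
      have h11 : (1:ℝ) + 1 = 2 := by norm_num
      rw [h11]
      nlinarith [h2]
    have hnn : 0 ≤ (1/2) * Real.sqrt (1 + Real.sqrt 2) := by positivity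
    rw [hK_def]
    simp only []
    rw [harg, Real.sqrt_sq hnn]
  rw [← hK1, ← hl_eq]
  exact hl
end

section
/- Let λ ≥ 1 be a natural number. Then as r → 1 from below with r ∈ (0,1), the function r ↦ ∑_{j≥0} (−1)^j · C(λ + 2j − 1, 2j) · r^{2j} tends to cos(λπ/4) / 2^{λ/2}; i.e. the Abel sum of 1 − λ(λ+1)/(1·2) + λ(λ+1)(λ+2)(λ+3)/(1·2·3·4) − ⋯ equals cos(λπ/4)/2^{λ/2}. -/
open Complex Filter

lemma key_hasSum (m : ℕ) (hm : 1 ≤ m) {r : ℝ} (h0 : 0 < r) (h1 : r < 1) :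
    HasSum (fun j : ℕ => (-1 : ℝ) ^ j * ((m + 2 * j - 1).choose (2 * j) : ℝ) * r ^ (2 * j))
      ((1 / (1 - I * r) ^ m).re) := by
  have hz : ‖(I * r : ℂ)‖ < 1 := by
    rw [norm_mul, Complex.norm_I, one_mul, Complex.norm_real, Real.norm_eq_abs, abs_of_pos h0]
    exact h1
  have h := hasSum_choose_mul_geometric_of_norm_lt_one (𝕜 := ℂ) (m - 1) hz
  rw [Nat.sub_add_cancel hm] at h
  have hre := Complex.hasSum_re h
  have hinj : Function.Injective (fun j : ℕ => 2 * j) := fun a b hab => by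
    simp only at hab; omega
  rw [← Function.Injective.hasSum_iff hinj ?_] at hre
  · convert hre using 2 with j
    have hc : (2 * j + (m - 1)).choose (m - 1) = (m + 2 * j - 1).choose (2 * j) := by
      have h2 : m + 2 * j - 1 = 2 * j + (m - 1) := by omega
      rw [h2, ← Nat.choose_symm (by omega)]
      congr 1
      omega
    simp only [Function.comp]
    rw [← hc]
    have hpow : ((I : ℂ) * r) ^ (2 * j) = ((-1 : ℝ) ^ j * r ^ (2 * j) : ℝ) := by
      rw [mul_pow, pow_mul, I_sq]
      push_cast
      ring
    rw [hpow, ← Complex.ofReal_natCast, ← Complex.ofReal_mul, Complex.ofReal_re]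
    ring
  · intro n hn
    obtain ⟨k, hk⟩ : ∃ k, n = 2 * k + 1 := by
      rcases Nat.even_or_odd n with ⟨k, hk⟩ | ⟨k, hk⟩
      · exact absurd ⟨k, show 2 * k = n by omega⟩ hn
      · exact ⟨k, hk⟩
    subst hk
    have : ((((2 * k + 1) + (m - 1)).choose (m - 1) : ℂ) * ((I:ℂ) * r) ^ (2 * k + 1)) =
        ((((2 * k + 1) + (m - 1)).choose (m - 1) : ℝ) * (-1) ^ k * r ^ (2 * k + 1) : ℝ) * I := by
      rw [pow_succ, mul_pow, pow_mul, I_sq]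
      push_cast
      ring
    rw [this, Complex.mul_re, Complex.ofReal_re, Complex.ofReal_im, Complex.I_re, Complex.I_im]
    ring

lemma value_re (m : ℕ) :
    ((1 / (1 - I) ^ m) : ℂ).re = Real.cos (m * Real.pi / 4) / Real.sqrt 2 ^ m := by
  have hsq : (Real.sqrt 2 : ℂ) * (Real.sqrt 2 : ℂ) = 2 := by
    norm_cast
    rw [Real.mul_self_sqrt (by norm_num : (0:ℝ) ≤ 2)]
  have h1 : (1 - I : ℂ) = (Real.sqrt 2 : ℂ) * Complex.exp (↑(-(Real.pi/4)) * I) := by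
    rw [Complex.exp_mul_I, ← Complex.ofReal_cos, ← Complex.ofReal_sin,
        Real.cos_neg, Real.sin_neg, Real.cos_pi_div_four, Real.sin_pi_div_four]
    push_cast
    field_simp
    rw [sq, hsq]
    ring
  rw [h1, mul_pow, ← Complex.exp_nat_mul]
  have h3 : (m : ℂ) * (↑(-(Real.pi/4)) * I) = ↑(-(m * Real.pi/4)) * I := by push_cast; ring
  rw [h3, one_div, mul_inv, ← Complex.exp_neg]
  have h4 : -(↑(-(m * Real.pi/4)) * I) = ↑(m * Real.pi/4 : ℝ) * I := by push_cast; ring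
  rw [h4]
  have h5 : ((Real.sqrt 2 : ℂ) ^ m)⁻¹ = ((Real.sqrt 2 ^ m)⁻¹ : ℝ) := by push_cast; ring
  rw [h5, Complex.re_ofReal_mul, Complex.exp_ofReal_mul_I_re]
  ring

theorem abel_sum_neg_int_binomial_even' (m : ℕ) (hm : 1 ≤ m) :
    Filter.Tendsto
      (fun r : ℝ =>
        ∑' j : ℕ, (-1 : ℝ) ^ j * ((m + 2 * j - 1).choose (2 * j) : ℝ) * r ^ (2 * j))
      (nhdsWithin 1 (Set.Ioo 0 1))
      (nhds (Real.cos (m * Real.pi / 4) / Real.sqrt 2 ^ m)) := by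
  have hne : (1 - I * ((1:ℝ):ℂ)) ^ m ≠ 0 := by
    apply pow_ne_zero
    intro h
    have := congrArg Complex.im h
    simp at this
  have hca : ContinuousAt (fun r : ℝ => ((1 / (1 - I * r) ^ m : ℂ)).re) 1 := by
    apply Complex.continuous_re.continuousAt.comp
    exact ContinuousAt.div continuousAt_const
      (((continuousAt_const.sub (continuousAt_const.mul Complex.continuous_ofReal.continuousAt)).pow m)) hne
  have htend : Filter.Tendsto (fun r : ℝ => ((1 / (1 - I * r) ^ m : ℂ)).re)
      (nhdsWithin 1 (Set.Ioo 0 1)) (nhds ((1 / (1 - I * ((1:ℝ):ℂ)) ^ m).re)) :=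
    hca.continuousWithinAt
  have hval : ((1 / (1 - I * ((1:ℝ):ℂ)) ^ m) : ℂ).re
      = Real.cos (m * Real.pi / 4) / Real.sqrt 2 ^ m := by
    rw [show (I * ((1:ℝ):ℂ)) = I by simp]
    exact value_re m
  rw [hval] at htend
  apply htend.congr'
  filter_upwards [self_mem_nhdsWithin] with r hr
  exact ((key_hasSum m hm hr.1 hr.2).tsum_eq).symm


theorem abel_sum_neg_int_binomial_even (m : ℕ) (hm : 1 ≤ m) :
    Filter.Tendsto
      (fun r : ℝ =>
        ∑' j : ℕ, (-1 : ℝ) ^ j * ((m + 2 * j - 1).choose (2 * j) : ℝ) * r ^ (2 * j))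
      (nhdsWithin 1 (Set.Ioo 0 1))
      (nhds (Real.cos (m * Real.pi / 4) / Real.sqrt 2 ^ m)) := by
  exact abel_sum_neg_int_binomial_even' m hm
end
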